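/- arXiv:0709.2723 — 5 statements merged into one kernel-verified Lean document; each statement's English description precedes it below -/
import Mathlib

section
/- Suppose there is a constant C > 0 such that for all large x there exist integers d, e ∈ [x^{1/4} − C·x^{1/8}, x^{1/4} + C·x^{1/8}] with d·e = x^{1/2} − 2·x^{1/4} + O(x^{1/8}). Then d·e·(d+2)·(e+2) = x + O(x^{5/8}), and the four numbers d·e, (d+2)·(e+2), d·(e+2), (d+2)·e all lie within O(x^{3/8}) of x^{1/2}. In particular, for every large x the interval [x − D·x^{5/8}, x + D·x^{5/8}] contains a (1/4, C')-almost square of type 2 for suitable constants C', D > 0. -/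
/-- An integer `n` is a `(θ, C)`-almost square of type 2. -/
def AlmostSquareType2 (n : ℤ) (θ C : ℝ) : Prop :=
  ∃ a₁ a₂ b₂ b₁ : ℤ, a₁ < a₂ ∧ a₂ ≤ b₂ ∧ b₂ < b₁ ∧
    n = a₁ * b₁ ∧ n = a₂ * b₂ ∧
    ∀ c ∈ ({a₁, a₂, b₂, b₁} : Set ℤ),
      (n : ℝ) ^ ((1:ℝ)/2) - C * (n : ℝ) ^ θ ≤ (c : ℝ) ∧
      (c : ℝ) ≤ (n : ℝ) ^ ((1:ℝ)/2) + C * (n : ℝ) ^ θ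

lemma abs_comb_bound (C u a b : ℝ) (hC : 0 < C) (hu1 : 1 ≤ u)
    (ha1 : -(C*u) ≤ a) (ha2 : a ≤ C*u) (hb1 : -(2*C*u) ≤ b) (hb2 : b ≤ 2*C*u)
    (hM0 : 0 ≤ u^4 - 2*u^2) :
    |(-8*u^2 + 2*a*(u^4+2) + 2*b*(u^4-2*u^2) + a^2 + 2*a*b)| ≤ 30*(C+1)^2*u^5 := by
  have hu0 : (0:ℝ) < u := by linarith
  have haC : 0 ≤ C*u := by positivity
  have r1 : a*(u^4+2) ≤ (C*u)*(u^4+2) := mul_le_mul_of_nonneg_right ha2 (by positivity)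
  have r1' : -((C*u))*(u^4+2) ≤ a*(u^4+2) := mul_le_mul_of_nonneg_right ha1 (by positivity)
  have r2 : b*(u^4-2*u^2) ≤ (2*C*u)*(u^4-2*u^2) := mul_le_mul_of_nonneg_right hb2 hM0
  have r2' : -((2*C*u))*(u^4-2*u^2) ≤ b*(u^4-2*u^2) := mul_le_mul_of_nonneg_right hb1 hM0
  have r5 : a^2 ≤ (C*u)^2 := sq_le_sq' ha1 ha2
  have r5' : 0 ≤ a^2 := sq_nonneg a
  have r6 : |a*b| ≤ (C*u)*(2*C*u) := by
    rw [abs_mul]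
    exact mul_le_mul (abs_le.2 ⟨ha1, ha2⟩) (abs_le.2 ⟨hb1, hb2⟩) (abs_nonneg b) haC
  obtain ⟨r6a, r6b⟩ := abs_le.mp r6
  have q1 : 0 ≤ C*(u^5 - u) := by
    apply mul_nonneg hC.le
    nlinarith [pow_nonneg hu0.le 3, pow_nonneg hu0.le 2]
  have q2 : 0 ≤ C^2*(u^5 - u^2) := by
    apply mul_nonneg (sq_nonneg C)
    nlinarith [pow_nonneg hu0.le 2, pow_nonneg hu0.le 3]
  have q3 : (0:ℝ) ≤ C*u^3 := by positivity
  have q4 : (0:ℝ) ≤ u^5 := by positivity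
  have q5 : (0:ℝ) ≤ u^2 := by positivity
  have q6 : (0:ℝ) ≤ C*u^5 := by positivity
  have q7 : (0:ℝ) ≤ C^2*u^5 := by positivity
  have q8 : u^2 ≤ u^5 := by nlinarith [pow_nonneg hu0.le 2, pow_nonneg hu0.le 3]
  rw [abs_le]
  constructor <;> linarith

set_option maxHeartbeats 1000000 in
lemma aux_main (C u : ℝ) (hC : 0 < C) (hu : 100*(C+1)^2 ≤ u) (d e : ℤ) (hde : d ≤ e)
    (hd1 : u^2 - C*u ≤ (d:ℝ)) (hd2 : (d:ℝ) ≤ u^2 + C*u)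
    (he1 : u^2 - C*u ≤ (e:ℝ)) (he2 : (e:ℝ) ≤ u^2 + C*u)
    (hm : |(d:ℝ)*(e:ℝ) - (u^4 - 2*u^2)| ≤ C*u) :
    |(d:ℝ)*(e:ℝ)*((d:ℝ)+2)*((e:ℝ)+2) - u^8| ≤ 30*(C+1)^2*u^5 ∧
    |(d:ℝ)*(e:ℝ) - u^4| ≤ 30*(C+1)^2*u^3 ∧
    |((d:ℝ)+2)*((e:ℝ)+2) - u^4| ≤ 30*(C+1)^2*u^3 ∧
    |(d:ℝ)*((e:ℝ)+2) - u^4| ≤ 30*(C+1)^2*u^3 ∧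
    |((d:ℝ)+2)*(e:ℝ) - u^4| ≤ 30*(C+1)^2*u^3 ∧
    AlmostSquareType2 (d*e*(d+2)*(e+2)) (1/4) (200*(C+1)^2) := by
  obtain ⟨hm1, hm2⟩ := abs_le.mp hm
  have hC1 : (1:ℝ) ≤ (C+1)^2 := by nlinarith
  have hu100 : (100:ℝ) ≤ u := by linarith [hu, hC1]
  have hu1 : (1:ℝ) ≤ u := by linarith
  have hu0 : (0:ℝ) < u := by linarith
  have huC : C + 1 ≤ u := by nlinarith
  have hEu : 30*(C+1)^2 ≤ u := by linarith [sq_nonneg (C+1)]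
  have hEpos : (0:ℝ) < 30*(C+1)^2 := by positivity
  have hup2 : u ≤ u^2 := by nlinarith
  have hup3 : u^2 ≤ u^3 := by nlinarith
  have hup5 : u^3 ≤ u^5 := by
    have h := mul_nonneg (pow_nonneg hu0.le 3) (by nlinarith : (0:ℝ) ≤ u^2 - 1)
    nlinarith [h]
  have hM0 : (0:ℝ) ≤ u^4 - 2*u^2 := by nlinarith [sq_nonneg u]
  have hB1 : |(d:ℝ)*(e:ℝ)*((d:ℝ)+2)*((e:ℝ)+2) - u^8| ≤ 30*(C+1)^2*u^5 := by
    rw [show (d:ℝ)*(e:ℝ)*((d:ℝ)+2)*((e:ℝ)+2) - u^8 =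
      -8*u^2 + 2*((d:ℝ)*(e:ℝ) - (u^4 - 2*u^2))*(u^4+2)
        + 2*((((d:ℝ)-u^2) + ((e:ℝ)-u^2)))*(u^4-2*u^2)
        + ((d:ℝ)*(e:ℝ) - (u^4 - 2*u^2))^2
        + 2*((d:ℝ)*(e:ℝ) - (u^4 - 2*u^2))*((((d:ℝ)-u^2) + ((e:ℝ)-u^2))) by ring]
    exact abs_comb_bound C u _ _ hC hu1 (by linarith) (by linarith) (by linarith) (by linarith) hM0
  have qc : (0:ℝ) ≤ C*(u^2 - u) := mul_nonneg hC.le (by nlinarith)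
  have hF1 : |(d:ℝ)*(e:ℝ) - u^4| ≤ 6*(C+1)*u^2 := by
    rw [abs_le]; constructor <;> nlinarith [qc]
  have hF2 : |((d:ℝ)+2)*((e:ℝ)+2) - u^4| ≤ 6*(C+1)*u^2 := by
    rw [abs_le]; constructor <;> nlinarith [qc, sq_nonneg u]
  have hF3 : |(d:ℝ)*((e:ℝ)+2) - u^4| ≤ 6*(C+1)*u^2 := by
    rw [abs_le]; constructor <;> nlinarith [qc]
  have hF4 : |((d:ℝ)+2)*(e:ℝ) - u^4| ≤ 6*(C+1)*u^2 := by
    rw [abs_le]; constructor <;> nlinarith [qc]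
  have hsmall : 6*(C+1)*u^2 ≤ 30*(C+1)^2*u^3 := by
    linarith [mul_nonneg (mul_nonneg hC.le (by linarith : (0:ℝ) ≤ C+1)) (sq_nonneg u),
      mul_nonneg (mul_nonneg (by linarith : (0:ℝ) ≤ C+1) (by linarith : (0:ℝ) ≤ C+1))
        (by nlinarith : (0:ℝ) ≤ u^3 - u^2),
      mul_nonneg (by linarith : (0:ℝ) ≤ C+1) (sq_nonneg u)]
  have hprod1 : (1:ℝ)*1 ≤ u*(u-C) :=
    mul_le_mul hu1 (by linarith) (by norm_num) hu0.le
  have hdR : (1:ℝ) ≤ (d:ℝ) := by nlinarith [hprod1]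
  have heR : (1:ℝ) ≤ (e:ℝ) := by nlinarith [hprod1]
  have hdZ : 1 ≤ d := by exact_mod_cast hdR
  have heZ : 1 ≤ e := by exact_mod_cast heR
  have hnZ : (0:ℤ) < d*e*(d+2)*(e+2) :=
    mul_pos (mul_pos (mul_pos (by linarith) (by linarith)) (by linarith)) (by linarith)
  have hN0 : (0:ℝ) ≤ ((d*e*(d+2)*(e+2) : ℤ) : ℝ) := by exact_mod_cast hnZ.le
  have hNval : ((d*e*(d+2)*(e+2) : ℤ) : ℝ) = (d:ℝ)*(e:ℝ)*((d:ℝ)+2)*((e:ℝ)+2) := by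
    push_cast; ring
  have hAS : AlmostSquareType2 (d*e*(d+2)*(e+2)) (1/4) (200*(C+1)^2) := by
    refine ⟨d*e, d*(e+2), (d+2)*e, (d+2)*(e+2), ?_, ?_, ?_, by ring, by ring, ?_⟩
    · have h : d*(e+2) = d*e + 2*d := by ring
      linarith [h, hdZ]
    · have h : (d+2)*e = d*(e+2) + 2*(e-d) := by ring
      linarith [h, hde]
    · have h : (d+2)*(e+2) = (d+2)*e + 2*(d+2) := by ring
      linarith [h, hdZ]
    intro c hc
    set N := ((d*e*(d+2)*(e+2) : ℤ) : ℝ) with hNdef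
    set t := N ^ ((1:ℝ)/4) with htdef
    have ht0 : 0 ≤ t := Real.rpow_nonneg hN0 _
    have ht4 : t^4 = N := by
      rw [htdef, show (1:ℝ)/4 = ((4:ℕ):ℝ)⁻¹ by norm_num]
      exact Real.rpow_inv_natCast_pow hN0 (by norm_num)
    have ht2 : N ^ ((1:ℝ)/2) = t^2 := by
      rw [htdef, ← Real.rpow_natCast (N ^ ((1:ℝ)/4)) 2, ← Real.rpow_mul hN0]
      norm_num
    have hB1' := abs_le.mp hB1
    have hprodU : t^4 ≤ u^8 + 30*(C+1)^2*u^5 := by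
      rw [ht4, hNval]; linarith [hB1'.2]
    have hprodL : u^8 - 30*(C+1)^2*u^5 ≤ t^4 := by
      rw [ht4, hNval]; linarith [hB1'.1]
    have key1 : 30*(C+1)^2*u^5 ≤ u^6 := by
      have h := mul_le_mul_of_nonneg_right hEu (by positivity : (0:ℝ) ≤ u^5)
      linarith [h]
    have key2 : 16*u^6 ≤ u^8 := by
      have h := mul_nonneg (pow_nonneg hu0.le 6) (by nlinarith : (0:ℝ) ≤ u^2 - 16)
      linarith [h]
    have htlow : u^2/2 ≤ t := by
      have hB : (u^2/2)^4 ≤ N := by rw [← ht4]; linarith [hprodL, key1, key2]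
      have h := Real.rpow_le_rpow (by positivity) hB (by norm_num : (0:ℝ) ≤ (1:ℝ)/4)
      rwa [show ((u^2/2)^4 : ℝ) ^ ((1:ℝ)/4) = u^2/2 from by
        rw [show (1:ℝ)/4 = ((4:ℕ):ℝ)⁻¹ by norm_num]
        exact Real.pow_rpow_inv_natCast (by positivity) (by norm_num)] at h
    have hEsq : (30*(C+1)^2)^2*u^2 ≤ 30*(C+1)^2*u^5 := by
      have h1 := mul_le_mul_of_nonneg_right hEu (by positivity : (0:ℝ) ≤ 30*(C+1)^2*u^2)
      have h2 := mul_le_mul_of_nonneg_left hup5 (by positivity : (0:ℝ) ≤ 30*(C+1)^2)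
      have h3 := mul_le_mul_of_nonneg_left hup3 (by positivity : (0:ℝ) ≤ 30*(C+1)^2)
      linarith [h1, h2, h3]
    have hbpos : (0:ℝ) < t^2 + (u^4 + 30*(C+1)^2*u) := by positivity
    have hup1 : t^2 ≤ u^4 + 30*(C+1)^2*u := by
      have h1 : (t^2)^2 ≤ (u^4 + 30*(C+1)^2*u)^2 := by
        have hx1 : (0:ℝ) ≤ 30*(C+1)^2*u^5 := by positivity
        have hx2 : (0:ℝ) ≤ (30*(C+1)^2)^2*u^2 := by positivity
        linarith [hprodU, hx1, hx2]
      exact (abs_le_of_sq_le_sq' h1 (by positivity)).2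
    have hlow1 : u^4 - 30*(C+1)^2*u ≤ t^2 := by
      have h1 : (u^4 - 30*(C+1)^2*u)^2 ≤ (t^2)^2 := by
        linarith [hprodL, hEsq]
      exact (abs_le_of_sq_le_sq' h1 (sq_nonneg t)).2
    have hfac : ∀ cz : ℤ, |(cz:ℝ) - u^4| ≤ 6*(C+1)*u^2 →
        N ^ ((1:ℝ)/2) - 200*(C+1)^2 * t ≤ (cz:ℝ) ∧
        (cz:ℝ) ≤ N ^ ((1:ℝ)/2) + 200*(C+1)^2 * t := by
      intro cz hcz
      obtain ⟨hc1, hc2⟩ := abs_le.mp hcz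
      rw [ht2]
      have hkey : 36*(C+1)^2*u^2 ≤ 200*(C+1)^2*t := by
        have h := mul_nonneg (sq_nonneg (C+1)) (by linarith : (0:ℝ) ≤ t - u^2/2)
        linarith [h, mul_nonneg (sq_nonneg (C+1)) (sq_nonneg u)]
      have h6 : 6*(C+1)*u^2 ≤ 6*(C+1)^2*u^2 := by
        linarith [mul_nonneg (mul_nonneg hC.le (by linarith : (0:ℝ) ≤ C+1)) (sq_nonneg u)]
      have hEu2 : 30*(C+1)^2*u ≤ 30*(C+1)^2*u^2 := by
        linarith [mul_le_mul_of_nonneg_left hup2 (by positivity : (0:ℝ) ≤ 30*(C+1)^2)]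
      exact ⟨by linarith, by linarith⟩
    simp only [Set.mem_insert_iff, Set.mem_singleton_iff] at hc
    rcases hc with rfl | rfl | rfl | rfl
    · exact hfac (d*e) (by rw [show ((d*e : ℤ):ℝ) = (d:ℝ)*(e:ℝ) by push_cast; ring]; exact hF1)
    · exact hfac (d*(e+2)) (by rw [show ((d*(e+2) : ℤ):ℝ) = (d:ℝ)*((e:ℝ)+2) by push_cast; ring]; exact hF3)
    · exact hfac ((d+2)*e) (by rw [show (((d+2)*e : ℤ):ℝ) = ((d:ℝ)+2)*(e:ℝ) by push_cast; ring]; exact hF4)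
    · exact hfac ((d+2)*(e+2)) (by rw [show (((d+2)*(e+2) : ℤ):ℝ) = ((d:ℝ)+2)*((e:ℝ)+2) by push_cast; ring]; exact hF2)
  exact ⟨hB1, hF1.trans hsmall, hF2.trans hsmall, hF3.trans hsmall, hF4.trans hsmall, hAS⟩

set_option maxHeartbeats 1000000 in
theorem g_quarter_le_five_eighths (C : ℝ) (hC : C > 0) (x0 : ℝ)
    (hyp : ∀ x : ℝ, x ≥ x0 → ∃ d e : ℤ,
      x ^ ((1:ℝ)/4) - C * x ^ ((1:ℝ)/8) ≤ (d : ℝ) ∧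
      (d : ℝ) ≤ x ^ ((1:ℝ)/4) + C * x ^ ((1:ℝ)/8) ∧
      x ^ ((1:ℝ)/4) - C * x ^ ((1:ℝ)/8) ≤ (e : ℝ) ∧
      (e : ℝ) ≤ x ^ ((1:ℝ)/4) + C * x ^ ((1:ℝ)/8) ∧
      |(d : ℝ) * e - (x ^ ((1:ℝ)/2) - 2 * x ^ ((1:ℝ)/4))| ≤ C * x ^ ((1:ℝ)/8)) :
    ∃ C' D E : ℝ, C' > 0 ∧ D > 0 ∧ E > 0 ∧ ∃ x1 : ℝ, ∀ x : ℝ, x ≥ x1 →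
      (∃ d e : ℤ,
        x ^ ((1:ℝ)/4) - C * x ^ ((1:ℝ)/8) ≤ (d : ℝ) ∧
        (d : ℝ) ≤ x ^ ((1:ℝ)/4) + C * x ^ ((1:ℝ)/8) ∧
        x ^ ((1:ℝ)/4) - C * x ^ ((1:ℝ)/8) ≤ (e : ℝ) ∧
        (e : ℝ) ≤ x ^ ((1:ℝ)/4) + C * x ^ ((1:ℝ)/8) ∧
        |((d : ℝ) * e * (d + 2) * (e + 2)) - x| ≤ E * x ^ ((5:ℝ)/8) ∧
        |(d : ℝ) * e - x ^ ((1:ℝ)/2)| ≤ E * x ^ ((3:ℝ)/8) ∧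
        |((d : ℝ) + 2) * (e + 2) - x ^ ((1:ℝ)/2)| ≤ E * x ^ ((3:ℝ)/8) ∧
        |(d : ℝ) * (e + 2) - x ^ ((1:ℝ)/2)| ≤ E * x ^ ((3:ℝ)/8) ∧
        |((d : ℝ) + 2) * e - x ^ ((1:ℝ)/2)| ≤ E * x ^ ((3:ℝ)/8)) ∧
      ∃ n : ℤ, |(n : ℝ) - x| ≤ D * x ^ ((5:ℝ)/8) ∧ AlmostSquareType2 n (1/4) C' := by
  refine ⟨200*(C+1)^2, 30*(C+1)^2, 30*(C+1)^2, by positivity, by positivity, by positivity,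
    max x0 ((100*(C+1)^2)^8), fun x hx => ?_⟩
  have hT : (0:ℝ) < 100*(C+1)^2 := by positivity
  have hxT : (100*(C+1)^2)^8 ≤ x := le_trans (le_max_right _ _) hx
  have hx0 : (0:ℝ) < x := lt_of_lt_of_le (by positivity) hxT
  set u := x ^ ((1:ℝ)/8) with hu
  have hupos : 0 < u := Real.rpow_pos_of_pos hx0 _
  have hpow : ∀ n : ℕ, x ^ ((n:ℝ)/8) = u ^ n := by
    intro n
    rw [hu, ← Real.rpow_natCast (x ^ ((1:ℝ)/8)) n, ← Real.rpow_mul hx0.le]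
    congr 1
    ring
  have h14 : x ^ ((1:ℝ)/4) = u^2 := by
    rw [show (1:ℝ)/4 = ((2:ℕ):ℝ)/8 by norm_num]; exact hpow 2
  have h12 : x ^ ((1:ℝ)/2) = u^4 := by
    rw [show (1:ℝ)/2 = ((4:ℕ):ℝ)/8 by norm_num]; exact hpow 4
  have h38 : x ^ ((3:ℝ)/8) = u^3 := by
    rw [show (3:ℝ)/8 = ((3:ℕ):ℝ)/8 by norm_num]; exact hpow 3
  have h58 : x ^ ((5:ℝ)/8) = u^5 := by
    rw [show (5:ℝ)/8 = ((5:ℕ):ℝ)/8 by norm_num]; exact hpow 5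
  have hx8 : x = u^8 := by
    have h := hpow 8
    rw [show ((8:ℕ):ℝ)/8 = (1:ℝ) by norm_num, Real.rpow_one] at h
    exact h
  have hu_ge : 100*(C+1)^2 ≤ u := by
    have h := Real.rpow_le_rpow (by positivity) hxT (by norm_num : (0:ℝ) ≤ (1:ℝ)/8)
    rwa [show ((100*(C+1)^2)^8 : ℝ) ^ ((1:ℝ)/8) = 100*(C+1)^2 from by
      rw [show (1:ℝ)/8 = ((8:ℕ):ℝ)⁻¹ by norm_num]
      exact Real.pow_rpow_inv_natCast hT.le (by norm_num)] at h
  obtain ⟨d, e, h1, h2, h3, h4, h5⟩ := hyp x (le_trans (le_max_left _ _) hx)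
  rw [h14, ← hu] at h1 h2 h3 h4
  rw [h12, h14, ← hu] at h5
  rw [h14, h12, h38, h58]
  rw [show x = u^8 from hx8]
  rcases le_total d e with hde | hde
  · obtain ⟨B1, B2, B3, B4, B5, B6⟩ := aux_main C u hC hu_ge d e hde h1 h2 h3 h4 h5
    exact ⟨⟨d, e, h1, h2, h3, h4, B1, B2, B3, B4, B5⟩,
      ⟨d*e*(d+2)*(e+2), by push_cast; exact B1, B6⟩⟩
  · rw [mul_comm ((d:ℝ)) ((e:ℝ))] at h5
    obtain ⟨B1, B2, B3, B4, B5, B6⟩ := aux_main C u hC hu_ge e d hde h3 h4 h1 h2 h5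
    exact ⟨⟨e, d, h3, h4, h1, h2, B1, B2, B3, B4, B5⟩,
      ⟨e*d*(e+2)*(d+2), by push_cast; exact B1, B6⟩⟩
end

section
/- Let G ≤ H be positive integers with G, H ∈ [x^{1/4} − C·x^{1/16}, x^{1/4} + C·x^{1/16}] and 0 < GH − √x ≤ C·x^{1/8}. If nonnegative integers g, h ≤ C·x^{1/16} satisfy |(GH − √x)(GH + √x)/G² − (g² + h²)| ≤ C·x^{1/32}, then |x − (G − g)(G + g)(H − h)(H + h)| ≤ C'·x^{17/32} for some constant C' depending only on C. -/
set_option maxHeartbeats 1000000 in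
theorem quadratic_form_approx_step (C : ℝ) (hC : C > 0) :
    ∃ C' : ℝ, C' > 0 ∧ ∃ x0 : ℝ, ∀ x : ℝ, x ≥ x0 →
      ∀ G H : ℤ, 0 < G → G ≤ H →
        x ^ ((1:ℝ)/4) - C * x ^ ((1:ℝ)/16) ≤ (G : ℝ) →
        (G : ℝ) ≤ x ^ ((1:ℝ)/4) + C * x ^ ((1:ℝ)/16) →
        x ^ ((1:ℝ)/4) - C * x ^ ((1:ℝ)/16) ≤ (H : ℝ) →
        (H : ℝ) ≤ x ^ ((1:ℝ)/4) + C * x ^ ((1:ℝ)/16) →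
        0 < (G : ℝ) * H - Real.sqrt x →
        (G : ℝ) * H - Real.sqrt x ≤ C * x ^ ((1:ℝ)/8) →
        ∀ g h : ℕ, (g : ℝ) ≤ C * x ^ ((1:ℝ)/16) → (h : ℝ) ≤ C * x ^ ((1:ℝ)/16) →
          |((G : ℝ) * H - Real.sqrt x) * ((G : ℝ) * H + Real.sqrt x) / (G : ℝ) ^ 2 -
              ((g : ℝ) ^ 2 + (h : ℝ) ^ 2)| ≤ C * x ^ ((1:ℝ)/32) →
          |x - ((G : ℝ) - g) * ((G : ℝ) + g) * (((H : ℝ) - h) * ((H : ℝ) + h))| ≤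
            C' * x ^ ((17:ℝ)/32) := by
  refine ⟨4*C + 8*C^3 + C^4, by positivity, max 1 (C ^ ((16:ℝ)/3)), ?_⟩
  intro x hx G H hGpos hGH hG1 hG2 hH1 hH2 hA1 hA2 g h hg hh hE
  have hx1 : (1:ℝ) ≤ x := le_trans (le_max_left _ _) hx
  have hx0 : (0:ℝ) < x := lt_of_lt_of_le one_pos hx1
  have hC316 : C ≤ x ^ ((3:ℝ)/16) := by
    have h1 : C ^ ((16:ℝ)/3) ≤ x := le_trans (le_max_right _ _) hx
    have h2 : (C ^ ((16:ℝ)/3)) ^ ((3:ℝ)/16) = C := by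
      rw [← Real.rpow_mul hC.le]; norm_num
    calc C = (C ^ ((16:ℝ)/3)) ^ ((3:ℝ)/16) := h2.symm
      _ ≤ x ^ ((3:ℝ)/16) := Real.rpow_le_rpow (by positivity) h1 (by norm_num)
  have hp16 : (0:ℝ) ≤ x ^ ((1:ℝ)/16) := Real.rpow_nonneg hx0.le _
  have hCx16 : C * x ^ ((1:ℝ)/16) ≤ x ^ ((1:ℝ)/4) := by
    calc C * x ^ ((1:ℝ)/16) ≤ x ^ ((3:ℝ)/16) * x ^ ((1:ℝ)/16) :=
          mul_le_mul_of_nonneg_right hC316 hp16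
      _ = x ^ ((1:ℝ)/4) := by rw [← Real.rpow_add hx0]; norm_num
  have hp4 : (0:ℝ) < x ^ ((1:ℝ)/4) := Real.rpow_pos_of_pos hx0 _
  have hp32 : (0:ℝ) ≤ x ^ ((1:ℝ)/32) := Real.rpow_nonneg hx0.le _
  have hp1732 : (0:ℝ) ≤ x ^ ((17:ℝ)/32) := Real.rpow_nonneg hx0.le _
  have hGle : (G:ℝ) ≤ 2 * x ^ ((1:ℝ)/4) := by linarith
  have hHle : (H:ℝ) ≤ 2 * x ^ ((1:ℝ)/4) := by linarith
  have hGr : (0:ℝ) < (G:ℝ) := by exact_mod_cast hGpos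
  have hHGr : (G:ℝ) ≤ (H:ℝ) := by exact_mod_cast hGH
  have e1 : x ^ ((1:ℝ)/4) * x ^ ((1:ℝ)/4) = x ^ ((1:ℝ)/2) := by
    rw [← Real.rpow_add hx0]; norm_num
  have e2 : x ^ ((1:ℝ)/2) * x ^ ((1:ℝ)/32) = x ^ ((17:ℝ)/32) := by
    rw [← Real.rpow_add hx0]; norm_num
  have e3 : x ^ ((1:ℝ)/16) * x ^ ((1:ℝ)/16) = x ^ ((1:ℝ)/8) := by
    rw [← Real.rpow_add hx0]; norm_num
  have e4 : x ^ ((1:ℝ)/8) * (x ^ ((1:ℝ)/16) * x ^ ((1:ℝ)/4)) = x ^ ((7:ℝ)/16) := by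
    rw [← Real.rpow_add hx0, ← Real.rpow_add hx0]; norm_num
  have e5 : x ^ ((1:ℝ)/8) * x ^ ((1:ℝ)/8) = x ^ ((1:ℝ)/4) := by
    rw [← Real.rpow_add hx0]; norm_num
  have m1 : x ^ ((7:ℝ)/16) ≤ x ^ ((17:ℝ)/32) :=
    Real.rpow_le_rpow_of_exponent_le hx1 (by norm_num)
  have m2 : x ^ ((1:ℝ)/4) ≤ x ^ ((17:ℝ)/32) :=
    Real.rpow_le_rpow_of_exponent_le hx1 (by norm_num)
  set s := Real.sqrt x with hsdef
  have hs : s ^ 2 = x := Real.sq_sqrt hx0.le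
  have hGne : ((G:ℝ))^2 ≠ 0 := by positivity
  set E := ((G:ℝ)*H - s)*((G:ℝ)*H + s)/(G:ℝ)^2 - ((g:ℝ)^2 + (h:ℝ)^2) with hEdef
  have hEG : (G:ℝ)^2 * E = (G:ℝ)^2*(H:ℝ)^2 - x - (G:ℝ)^2*((g:ℝ)^2+(h:ℝ)^2) := by
    rw [hEdef]
    field_simp
    linear_combination -hs
  have hid : x - ((G:ℝ) - g) * ((G:ℝ) + g) * (((H:ℝ) - h) * ((H:ℝ) + h))
      = -((G:ℝ)^2 * E) + (g:ℝ)^2 * ((H:ℝ)^2 - (G:ℝ)^2) - (g:ℝ)^2 * (h:ℝ)^2 := by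
    linear_combination hEG
  -- bounds
  have hgnn : (0:ℝ) ≤ (g:ℝ) := Nat.cast_nonneg g
  have hhnn : (0:ℝ) ≤ (h:ℝ) := Nat.cast_nonneg h
  have hgCnn : (0:ℝ) ≤ C * x ^ ((1:ℝ)/16) := by positivity
  have hsq : (C * x ^ ((1:ℝ)/16)) * (C * x ^ ((1:ℝ)/16)) = C^2 * x ^ ((1:ℝ)/8) := by
    rw [show (C * x ^ ((1:ℝ)/16)) * (C * x ^ ((1:ℝ)/16))
        = C^2 * (x ^ ((1:ℝ)/16) * x ^ ((1:ℝ)/16)) from by ring, e3]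
  have hg2 : (g:ℝ)^2 ≤ C^2 * x ^ ((1:ℝ)/8) := by
    have h1 : (g:ℝ) * (g:ℝ) ≤ (C * x ^ ((1:ℝ)/16)) * (C * x ^ ((1:ℝ)/16)) :=
      mul_le_mul hg hg hgnn hgCnn
    calc (g:ℝ)^2 = (g:ℝ) * (g:ℝ) := by ring
      _ ≤ _ := h1
      _ = C^2 * x ^ ((1:ℝ)/8) := hsq
  have hh2 : (h:ℝ)^2 ≤ C^2 * x ^ ((1:ℝ)/8) := by
    have h1 : (h:ℝ) * (h:ℝ) ≤ (C * x ^ ((1:ℝ)/16)) * (C * x ^ ((1:ℝ)/16)) :=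
      mul_le_mul hh hh hhnn hgCnn
    calc (h:ℝ)^2 = (h:ℝ) * (h:ℝ) := by ring
      _ ≤ _ := h1
      _ = C^2 * x ^ ((1:ℝ)/8) := hsq
  have bG2 : (G:ℝ)^2 ≤ 4 * x ^ ((1:ℝ)/2) := by
    have h1 : (G:ℝ) * (G:ℝ) ≤ (2 * x ^ ((1:ℝ)/4)) * (2 * x ^ ((1:ℝ)/4)) :=
      mul_le_mul hGle hGle hGr.le (by positivity)
    calc (G:ℝ)^2 = (G:ℝ) * (G:ℝ) := by ring
      _ ≤ (2 * x ^ ((1:ℝ)/4)) * (2 * x ^ ((1:ℝ)/4)) := h1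
      _ = 4 * (x ^ ((1:ℝ)/4) * x ^ ((1:ℝ)/4)) := by ring
      _ = 4 * x ^ ((1:ℝ)/2) := by rw [e1]
  have hEabs := abs_le.mp hE
  have hmul : (G:ℝ)^2 * (C * x ^ ((1:ℝ)/32)) ≤ 4*C * x ^ ((17:ℝ)/32) := by
    calc (G:ℝ)^2 * (C * x ^ ((1:ℝ)/32))
        ≤ (4 * x ^ ((1:ℝ)/2)) * (C * x ^ ((1:ℝ)/32)) :=
          mul_le_mul_of_nonneg_right bG2 (by positivity)
      _ = 4*C * (x ^ ((1:ℝ)/2) * x ^ ((1:ℝ)/32)) := by ring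
      _ = 4*C * x ^ ((17:ℝ)/32) := by rw [e2]
  have term1u : (G:ℝ)^2 * E ≤ 4*C * x ^ ((17:ℝ)/32) :=
    le_trans (mul_le_mul_of_nonneg_left hEabs.2 (sq_nonneg _)) hmul
  have term1l : -(4*C * x ^ ((17:ℝ)/32)) ≤ (G:ℝ)^2 * E := by
    have h1 : (G:ℝ)^2 * (-(C * x ^ ((1:ℝ)/32))) ≤ (G:ℝ)^2 * E :=
      mul_le_mul_of_nonneg_left hEabs.1 (sq_nonneg _)
    have h2 : (G:ℝ)^2 * (-(C * x ^ ((1:ℝ)/32))) = -((G:ℝ)^2 * (C * x ^ ((1:ℝ)/32))) := by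
      ring
    linarith [hmul]
  have hHpGnn : (0:ℝ) ≤ (H:ℝ) + (G:ℝ) :=
    le_of_lt (add_pos (lt_of_lt_of_le hGr hHGr) hGr)
  have hH2G2nn : (0:ℝ) ≤ (H:ℝ)^2 - (G:ℝ)^2 := by
    calc (0:ℝ) ≤ ((H:ℝ) - G) * ((H:ℝ) + G) :=
          mul_nonneg (sub_nonneg.mpr hHGr) hHpGnn
      _ = (H:ℝ)^2 - (G:ℝ)^2 := by ring
  have hHmG : (H:ℝ) - G ≤ 2*C * x ^ ((1:ℝ)/16) := by linarith
  have hHpG : (H:ℝ) + G ≤ 4 * x ^ ((1:ℝ)/4) := by linarith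
  have hd : (H:ℝ)^2 - (G:ℝ)^2 ≤ 8*C * (x ^ ((1:ℝ)/16) * x ^ ((1:ℝ)/4)) := by
    have h1 : ((H:ℝ) - G) * ((H:ℝ) + G) ≤ (2*C * x ^ ((1:ℝ)/16)) * (4 * x ^ ((1:ℝ)/4)) :=
      mul_le_mul hHmG hHpG hHpGnn (by positivity)
    calc (H:ℝ)^2 - (G:ℝ)^2 = ((H:ℝ) - G) * ((H:ℝ) + G) := by ring
      _ ≤ (2*C * x ^ ((1:ℝ)/16)) * (4 * x ^ ((1:ℝ)/4)) := h1
      _ = 8*C * (x ^ ((1:ℝ)/16) * x ^ ((1:ℝ)/4)) := by ring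
  have term2 : (g:ℝ)^2 * ((H:ℝ)^2 - (G:ℝ)^2) ≤ 8*C^3 * x ^ ((17:ℝ)/32) := by
    calc (g:ℝ)^2 * ((H:ℝ)^2 - (G:ℝ)^2)
        ≤ (C^2 * x ^ ((1:ℝ)/8)) * (8*C * (x ^ ((1:ℝ)/16) * x ^ ((1:ℝ)/4))) :=
          mul_le_mul hg2 hd hH2G2nn (by positivity)
      _ = 8*C^3 * (x ^ ((1:ℝ)/8) * (x ^ ((1:ℝ)/16) * x ^ ((1:ℝ)/4))) := by ring
      _ = 8*C^3 * x ^ ((7:ℝ)/16) := by rw [e4]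
      _ ≤ 8*C^3 * x ^ ((17:ℝ)/32) := by
          exact mul_le_mul_of_nonneg_left m1 (by positivity)
  have term3 : (g:ℝ)^2 * (h:ℝ)^2 ≤ C^4 * x ^ ((17:ℝ)/32) := by
    calc (g:ℝ)^2 * (h:ℝ)^2 ≤ (C^2 * x ^ ((1:ℝ)/8)) * (C^2 * x ^ ((1:ℝ)/8)) :=
          mul_le_mul hg2 hh2 (sq_nonneg _) (by positivity)
      _ = C^4 * (x ^ ((1:ℝ)/8) * x ^ ((1:ℝ)/8)) := by ring
      _ = C^4 * x ^ ((1:ℝ)/4) := by rw [e5]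
      _ ≤ C^4 * x ^ ((17:ℝ)/32) := mul_le_mul_of_nonneg_left m2 (by positivity)
  have tnn2 : (0:ℝ) ≤ (g:ℝ)^2 * ((H:ℝ)^2 - (G:ℝ)^2) := mul_nonneg (sq_nonneg _) hH2G2nn
  have tnn3 : (0:ℝ) ≤ (g:ℝ)^2 * (h:ℝ)^2 := mul_nonneg (sq_nonneg _) (sq_nonneg _)
  have pos2 : (0:ℝ) ≤ 8*C^3 * x ^ ((17:ℝ)/32) := by positivity
  have pos3 : (0:ℝ) ≤ C^4 * x ^ ((17:ℝ)/32) := by positivity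
  have pos1 : (0:ℝ) ≤ 4*C * x ^ ((17:ℝ)/32) := by positivity
  rw [hid, abs_le]
  set a := x ^ ((17:ℝ)/32) with ha
  constructor
  · calc -((4*C + 8*C^3 + C^4) * a)
        = -(4*C*a) + (-(8*C^3*a)) + (-(C^4*a)) := by ring
      _ ≤ -((G:ℝ)^2 * E) + (g:ℝ)^2 * ((H:ℝ)^2 - (G:ℝ)^2) + (-((g:ℝ)^2 * (h:ℝ)^2)) :=
          add_le_add (add_le_add (neg_le_neg term1u)
            (le_trans (neg_nonpos.mpr pos2) tnn2)) (neg_le_neg term3)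
      _ = -((G:ℝ)^2 * E) + (g:ℝ)^2 * ((H:ℝ)^2 - (G:ℝ)^2) - (g:ℝ)^2 * (h:ℝ)^2 := by ring
  · calc -((G:ℝ)^2 * E) + (g:ℝ)^2 * ((H:ℝ)^2 - (G:ℝ)^2) - (g:ℝ)^2 * (h:ℝ)^2
        = -((G:ℝ)^2 * E) + (g:ℝ)^2 * ((H:ℝ)^2 - (G:ℝ)^2) + (-((g:ℝ)^2 * (h:ℝ)^2)) := by
          ring
      _ ≤ 4*C*a + 8*C^3*a + C^4*a :=
          add_le_add (add_le_add (neg_le.mp term1l) term2)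
            (le_trans (neg_nonpos.mpr tnn3) pos3)
      _ = (4*C + 8*C^3 + C^4) * a := by ring
end

section
/- For all sufficiently large real x and every θ with 5/16 ≤ θ ≤ 1/2, there exist constants C', C'' > 0 (independent of x) and an integer n with |n − x| ≤ C''·x^{17/32} such that n is a (θ, C')-almost square of type 2. -/
set_option maxHeartbeats 1000000

lemma rpow_frac (t x : ℝ) (ht : 0 ≤ t) (hx : x = t ^ (32:ℕ)) (k : ℕ) :
    x ^ ((k:ℝ)/32) = t ^ k := by
  rw [hx, ← Real.rpow_natCast t 32, ← Real.rpow_mul ht,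
    show ((32:ℕ):ℝ) * ((k:ℝ)/32) = ((k:ℕ):ℝ) by push_cast; ring, Real.rpow_natCast]

lemma key (x θ t : ℝ) (G H g h : ℕ)
    (ht : 100 ≤ t) (hx : x = t ^ (32:ℕ))
    (hθ : 5/16 ≤ θ)
    (hg1 : 1 ≤ g) (hh1 : 1 ≤ h)
    (hG1 : t^8/2 ≤ (G:ℝ)) (hG2 : (G:ℝ) ≤ 2*t^8)
    (hH1 : t^8 ≤ (H:ℝ)) (hH2 : (H:ℝ) ≤ 2*t^8)
    (hGg : (G:ℝ)*g ≤ 5*t^10) (hHh : (H:ℝ)*h ≤ 5*t^10)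
    (hgr : (g:ℝ) ≤ 8*t^2) (hhr : (h:ℝ) ≤ 5*t)
    (herr : |(((((G:ℤ)^2 - (h:ℤ)^2) * ((H:ℤ)^2 - (g:ℤ)^2)) : ℤ) : ℝ) - x| ≤ 32*t^17) :
    |(((((G:ℤ)^2 - (h:ℤ)^2) * ((H:ℤ)^2 - (g:ℤ)^2)) : ℤ) : ℝ) - x| ≤ 32 * x ^ ((17:ℝ)/32) ∧
    AlmostSquareType2 (((G:ℤ)^2 - (h:ℤ)^2) * ((H:ℤ)^2 - (g:ℤ)^2)) θ 100 := by
  have ht0 : (0:ℝ) < t := by linarith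
  have hone : (1:ℝ) ≤ t := by linarith
  have hpow : ∀ k : ℕ, (100:ℝ) * t^k ≤ t^(k+1) := by
    intro k
    have : (100:ℝ) * t^k ≤ t * t^k := by nlinarith [pow_pos ht0 k]
    calc (100:ℝ) * t^k ≤ t * t^k := this
    _ = t^(k+1) := by ring
  have hmono : ∀ j k : ℕ, j ≤ k → t^j ≤ t^k := fun j k hjk => pow_le_pow_right₀ hone hjk
  have h17 : x ^ ((17:ℝ)/32) = t ^ 17 := rpow_frac t x ht0.le hx 17
  set n : ℤ := ((G:ℤ)^2 - (h:ℤ)^2) * ((H:ℤ)^2 - (g:ℤ)^2) with hn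
  refine ⟨by rw [h17]; exact herr, ?_⟩
  have hg0 : (0:ℝ) ≤ (g:ℝ) := Nat.cast_nonneg g
  have hh0 : (0:ℝ) ≤ (h:ℝ) := Nat.cast_nonneg h
  have hGr0 : (0:ℝ) ≤ (G:ℝ) := Nat.cast_nonneg G
  have hHr0 : (0:ℝ) ≤ (H:ℝ) := Nat.cast_nonneg H
  have hg1' : (1:ℝ) ≤ (g:ℝ) := by exact_mod_cast hg1
  have hh1' : (1:ℝ) ≤ (h:ℝ) := by exact_mod_cast hh1
  have ht2 : (0:ℝ) < t^2 := by positivity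
  have hhG : (h:ℤ) < (G:ℤ) := by
    have h8 : 11 * t ≤ t^8 := by
      calc (11:ℝ) * t ≤ 100 * t^1 := by nlinarith
      _ ≤ t^2 := hpow 1
      _ ≤ t^8 := hmono 2 8 (by norm_num)
    have : (h:ℝ) < (G:ℝ) := by linarith
    exact_mod_cast this
  have hgH : (g:ℤ) < (H:ℤ) := by
    have h8 : 9 * t^2 ≤ t^8 := by
      calc (9:ℝ) * t^2 ≤ 100 * t^2 := by nlinarith [pow_pos ht0 2]
      _ ≤ t^3 := hpow 2
      _ ≤ t^8 := hmono 3 8 (by norm_num)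
    have : (g:ℝ) < (H:ℝ) := by linarith
    exact_mod_cast this
  set p₁ : ℤ := ((G:ℤ) - h) * ((H:ℤ) - g) with hp₁
  set q₁ : ℤ := ((G:ℤ) + h) * ((H:ℤ) + g) with hq₁
  set c₁ : ℤ := ((G:ℤ) - h) * ((H:ℤ) + g) with hc₁
  set c₂ : ℤ := ((G:ℤ) + h) * ((H:ℤ) - g) with hc₂
  have hGh0 : (0:ℤ) < (G:ℤ) - h := by omega
  have hHg0 : (0:ℤ) < (H:ℤ) - g := by omega
  set D : ℝ := (G:ℝ)*g + (H:ℝ)*h + (g:ℝ)*h with hD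
  have hgh : (g:ℝ)*h ≤ t^10 := by
    have h1 : (g:ℝ)*h ≤ 40*t^3 := by nlinarith
    have h2 : (40:ℝ)*t^3 ≤ 100*t^3 := by nlinarith [pow_pos ht0 3]
    calc (g:ℝ)*h ≤ 100*t^3 := by linarith
    _ ≤ t^4 := hpow 3
    _ ≤ t^10 := hmono 4 10 (by norm_num)
  have hDle : D ≤ 11*t^10 := by rw [hD]; linarith
  have hD0 : 0 ≤ D := by rw [hD]; positivity
  have hwin : ∀ c : ℤ, c = p₁ ∨ c = c₁ ∨ c = c₂ ∨ c = q₁ →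
      (G:ℝ)*(H:ℝ) - D ≤ (c:ℝ) ∧ (c:ℝ) ≤ (G:ℝ)*(H:ℝ) + D := by
    have e1 : ((p₁:ℤ):ℝ) = (G:ℝ)*(H:ℝ) - (G:ℝ)*g - (H:ℝ)*h + (g:ℝ)*h := by
      rw [hp₁]; push_cast; ring
    have e2 : ((q₁:ℤ):ℝ) = (G:ℝ)*(H:ℝ) + (G:ℝ)*g + (H:ℝ)*h + (g:ℝ)*h := by
      rw [hq₁]; push_cast; ring
    have e3 : ((c₁:ℤ):ℝ) = (G:ℝ)*(H:ℝ) + (G:ℝ)*g - (H:ℝ)*h - (g:ℝ)*h := by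
      rw [hc₁]; push_cast; ring
    have e4 : ((c₂:ℤ):ℝ) = (G:ℝ)*(H:ℝ) - (G:ℝ)*g + (H:ℝ)*h - (g:ℝ)*h := by
      rw [hc₂]; push_cast; ring
    have m1 : (0:ℝ) ≤ (G:ℝ)*g := mul_nonneg hGr0 hg0
    have m2 : (0:ℝ) ≤ (H:ℝ)*h := mul_nonneg hHr0 hh0
    have m3 : (0:ℝ) ≤ (g:ℝ)*h := mul_nonneg hg0 hh0
    rintro c (rfl | rfl | rfl | rfl)
    · rw [e1, hD]; constructor <;> linarith
    · rw [e3, hD]; constructor <;> linarith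
    · rw [e4, hD]; constructor <;> linarith
    · rw [e2, hD]; constructor <;> linarith
  have hnval : ((n:ℤ):ℝ) = ((p₁:ℤ):ℝ) * ((q₁:ℤ):ℝ) := by
    rw [hn, hp₁, hq₁]; push_cast; ring
  have hnc : n = c₁ * c₂ := by rw [hn, hc₁, hc₂]; ring
  have hnp : n = p₁ * q₁ := by rw [hn, hp₁, hq₁]; ring
  have hnx : ((n:ℤ):ℝ) ≥ x - 32*t^17 := by
    have := (abs_le.mp herr).1; linarith
  have ht17 : 32*t^17 ≤ t^32/2 := by
    have : (100:ℝ)*t^17 ≤ t^18 := hpow 17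
    have h18 : t^18 ≤ t^32 := hmono 18 32 (by norm_num)
    nlinarith [pow_pos ht0 17]
  have hnhalf : ((n:ℤ):ℝ) ≥ x/2 := by
    have hx32 : x = t^32 := hx
    rw [hx32] at hnx ⊢; linarith
  have hn1 : (1:ℝ) ≤ ((n:ℤ):ℝ) := by
    have h1 : (2:ℝ) ≤ t^32 := by
      calc (2:ℝ) ≤ 100 := by norm_num
      _ = 100 * t^0 := by norm_num
      _ ≤ t^1 := hpow 0
      _ ≤ t^32 := hmono 1 32 (by norm_num)
    rw [hx] at hnhalf; linarith
  have hp₁w := hwin p₁ (Or.inl rfl)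
  have hq₁w := hwin q₁ (Or.inr (Or.inr (Or.inr rfl)))
  have hp₁0 : (0:ℝ) ≤ ((p₁:ℤ):ℝ) := by
    have : (0:ℤ) ≤ p₁ := le_of_lt (mul_pos hGh0 hHg0)
    exact_mod_cast this
  have hp₁q₁ : ((p₁:ℤ):ℝ) ≤ ((q₁:ℤ):ℝ) := by
    have : p₁ ≤ q₁ := by rw [hp₁, hq₁]; apply mul_le_mul <;> omega
    exact_mod_cast this
  have hsq : ((n:ℤ):ℝ) ^ ((1:ℝ)/2) = Real.sqrt ((n:ℤ):ℝ) := (Real.sqrt_eq_rpow _).symm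
  have hsl : ((p₁:ℤ):ℝ) ≤ Real.sqrt ((n:ℤ):ℝ) := by
    rw [hnval]
    calc ((p₁:ℤ):ℝ) = Real.sqrt (((p₁:ℤ):ℝ)^2) := (Real.sqrt_sq hp₁0).symm
    _ ≤ _ := Real.sqrt_le_sqrt (by nlinarith)
  have hsu : Real.sqrt ((n:ℤ):ℝ) ≤ ((q₁:ℤ):ℝ) := by
    rw [hnval]
    calc Real.sqrt (((p₁:ℤ):ℝ) * ((q₁:ℤ):ℝ)) ≤ Real.sqrt (((q₁:ℤ):ℝ)^2) :=
      Real.sqrt_le_sqrt (by nlinarith)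
    _ = ((q₁:ℤ):ℝ) := Real.sqrt_sq (by linarith)
  have hnθ : 22*t^10 ≤ 100 * ((n:ℤ):ℝ) ^ θ := by
    have h1 : ((n:ℤ):ℝ) ^ ((5:ℝ)/16) ≤ ((n:ℤ):ℝ) ^ θ :=
      Real.rpow_le_rpow_of_exponent_le hn1 (by linarith)
    have h2 : (x/2) ^ ((5:ℝ)/16) ≤ ((n:ℤ):ℝ) ^ ((5:ℝ)/16) :=
      Real.rpow_le_rpow (by rw [hx]; positivity) hnhalf (by norm_num)
    have h3 : (x/2) ^ ((5:ℝ)/16) = x ^ ((5:ℝ)/16) * (1/2:ℝ) ^ ((5:ℝ)/16) := by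
      rw [show x/2 = x * (1/2:ℝ) by ring,
        Real.mul_rpow (by rw [hx]; positivity) (by norm_num)]
    have h4 : (1/2:ℝ) ≤ (1/2:ℝ) ^ ((5:ℝ)/16) := by
      calc (1/2:ℝ) = (1/2:ℝ) ^ (1:ℝ) := by norm_num
      _ ≤ _ := Real.rpow_le_rpow_of_exponent_ge (by norm_num) (by norm_num) (by norm_num)
    have h5 : x ^ ((5:ℝ)/16) = t ^ 10 := by
      have h10 := rpow_frac t x ht0.le hx 10
      have : ((10:ℕ):ℝ)/32 = (5:ℝ)/16 := by norm_num
      rw [← this]; exact h10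
    have ht10 : (0:ℝ) < t^10 := by positivity
    have h6 : t^10 * (1/2:ℝ) ≤ x ^ ((5:ℝ)/16) * (1/2:ℝ) ^ ((5:ℝ)/16) := by
      rw [h5]
      exact mul_le_mul_of_nonneg_left h4 ht10.le
    have h7 : t^10/2 ≤ ((n:ℤ):ℝ) ^ θ := by
      have := le_trans (le_trans (by linarith : t^10/2 ≤ x ^ ((5:ℝ)/16) * (1/2:ℝ) ^ ((5:ℝ)/16)) (h3 ▸ h2)) h1
      exact this
    linarith
  have hmem : ∀ c : ℤ, c = p₁ ∨ c = c₁ ∨ c = c₂ ∨ c = q₁ →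
      ((n:ℤ) : ℝ) ^ ((1:ℝ)/2) - 100 * ((n:ℤ) : ℝ) ^ θ ≤ (c : ℝ) ∧
      (c : ℝ) ≤ ((n:ℤ) : ℝ) ^ ((1:ℝ)/2) + 100 * ((n:ℤ) : ℝ) ^ θ := by
    intro c hc
    have hw := hwin c hc
    rw [hsq]
    have hu : Real.sqrt ((n:ℤ):ℝ) ≤ (G:ℝ)*(H:ℝ) + D := le_trans hsu hq₁w.2
    have hl : (G:ℝ)*(H:ℝ) - D ≤ Real.sqrt ((n:ℤ):ℝ) := le_trans hp₁w.1 hsl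
    constructor
    · linarith [hw.1]
    · linarith [hw.2]
  have o1 : p₁ < c₁ := by
    rw [hp₁, hc₁]
    apply mul_lt_mul_of_pos_left (by omega) hGh0
  have o2 : p₁ < c₂ := by
    rw [hp₁, hc₂]
    apply mul_lt_mul_of_pos_right (by omega) hHg0
  have o3 : c₁ < q₁ := by
    rw [hc₁, hq₁]
    apply mul_lt_mul_of_pos_right (by omega) (by omega)
  have o4 : c₂ < q₁ := by
    rw [hc₂, hq₁]
    apply mul_lt_mul_of_pos_left (by omega) (by omega)
  refine ⟨p₁, min c₁ c₂, max c₁ c₂, q₁, lt_min o1 o2, min_le_max, max_lt o3 o4,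
    hnp, by rw [min_mul_max]; exact hnc, ?_⟩
  rintro c hc
  simp only [Set.mem_insert_iff, Set.mem_singleton_iff] at hc
  apply hmem
  rcases le_total c₁ c₂ with hcc | hcc
  · rw [min_eq_left hcc, max_eq_right hcc] at hc; tauto
  · rw [min_eq_right hcc, max_eq_left hcc] at hc; tauto


lemma sqrt_upper {y A B : ℝ} (hy : 0 ≤ y) (hA : 0 ≤ A) (h : y^2 ≤ B) (hB : B ≤ A^2) :
    y ≤ A := by nlinarith

lemma sqrt_lower {y A B : ℝ} (hy : 0 ≤ y) (hA : 0 ≤ A) (h : B < (y+1)^2) (hB : A^2 ≤ B) :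
    A - 1 ≤ y := by nlinarith

lemma sq_le_of_le {y A : ℝ} (hy : 0 ≤ y) (h : y ≤ A) : y^2 ≤ A^2 := by nlinarith

lemma Rbound {T u w Gv : ℝ} (h1 : T ≤ u^2 + 2*u) (h2 : u - w ≤ Gv) (h3 : w ≤ u)
    (h4 : 0 ≤ w) (h5 : 0 ≤ Gv) : T - w^2 ≤ 2*u + 2*u*Gv := by
  have m : (u-w)*(u+w) ≤ Gv*(2*u) := by
    apply mul_le_mul h2 (by linarith) (by linarith) h5
  nlinarith [m]

lemma div_bound {g Gv c d : ℝ} (hg : 0 ≤ g) (hd : 0 < d) (hGv : d ≤ Gv) (h : Gv*g ≤ c*d) :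
    g ≤ c := by nlinarith [mul_le_mul_of_nonneg_right hGv hg]

section Main
set_option maxHeartbeats 4000000

theorem g_le_seventeen_thirtyseconds :
    ∃ C' C'' : ℝ, C' > 0 ∧ C'' > 0 ∧ ∃ x0 : ℝ, ∀ x : ℝ, x ≥ x0 →
      ∀ θ : ℝ, 5/16 ≤ θ → θ ≤ 1/2 →
        ∃ n : ℤ, |(n : ℝ) - x| ≤ C'' * x ^ ((17:ℝ)/32) ∧ AlmostSquareType2 n θ C' := by
  refine ⟨100, 32, by norm_num, by norm_num, (100:ℝ)^(32:ℕ), ?_⟩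
  intro x hx0 θ hθ1 hθ2
  have hxpos : (0:ℝ) < x := lt_of_lt_of_le (by positivity) hx0
  set t := x ^ ((1:ℝ)/32) with htdef
  have ht : (100:ℝ) ≤ t := by
    have h1 : ((100:ℝ)^(32:ℕ)) ^ ((1:ℝ)/32) ≤ x ^ ((1:ℝ)/32) :=
      Real.rpow_le_rpow (by positivity) hx0 (by norm_num)
    have h2 : ((100:ℝ)^(32:ℕ)) ^ ((1:ℝ)/32) = 100 := by
      rw [show (1:ℝ)/32 = ((32:ℕ):ℝ)⁻¹ by norm_num]
      exact Real.pow_rpow_inv_natCast (by norm_num) (by norm_num)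
    rw [← h2]; exact h1
  have hxt : x = t ^ (32:ℕ) := by
    rw [htdef, ← Real.rpow_natCast (x ^ ((1:ℝ)/32)) 32, ← Real.rpow_mul hxpos.le,
      show (1:ℝ)/32 * ((32:ℕ):ℝ) = 1 by push_cast; ring, Real.rpow_one]
  have ht0 : (0:ℝ) < t := by linarith
  have hone : (1:ℝ) ≤ t := by linarith
  have hpow : ∀ k : ℕ, (100:ℝ) * t^k ≤ t^(k+1) := by
    intro k
    have h1 : (0:ℝ) < t^k := pow_pos ht0 k
    have h2 : (100:ℝ) * t^k ≤ t * t^k := by nlinarith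
    calc (100:ℝ) * t^k ≤ t * t^k := h2
    _ = t^(k+1) := by ring
  have hmono : ∀ j k : ℕ, j ≤ k → t^j ≤ t^k := fun j k hjk => pow_le_pow_right₀ hone hjk
  have h100k : ∀ k : ℕ, (100:ℝ)^k ≤ t^k := fun k => pow_le_pow_left₀ (by norm_num) ht k
  have ht4 : (0:ℝ) < t^4 := by positivity
  have ht8 : (0:ℝ) < t^8 := by positivity
  have ht16 : (0:ℝ) < t^16 := by positivity
  have ht4b : (4:ℝ) ≤ t^4 := le_trans (by norm_num) (h100k 4)
  have ht8b : (4:ℝ) ≤ t^8 := le_trans (by norm_num) (h100k 8)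
  have h4t : 4*t^4 ≤ t^8 := by
    have h5 : (100:ℝ)*t^4 ≤ t^5 := by simpa using hpow 4
    have h6 : t^5 ≤ t^8 := hmono 5 8 (by norm_num)
    linarith
  -- integer setup
  set N : ℕ := ⌈x⌉₊ with hNdef
  have hN1 : x ≤ (N:ℝ) := Nat.le_ceil x
  have hN2 : (N:ℝ) ≤ x + 1 := (Nat.ceil_lt_add_one hxpos.le).le
  have hNx : t^32 ≤ (N:ℝ) := by rw [← hxt]; exact hN1
  have hNx2 : (N:ℝ) ≤ t^32 + 1 := by rw [← hxt]; exact hN2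
  set s : ℕ := Nat.sqrt N with hsdef
  have hs1 : ((s:ℝ))^2 ≤ (N:ℝ) := by exact_mod_cast Nat.sqrt_le' N
  have hs2 : (N:ℝ) < ((s:ℝ)+1)^2 := by exact_mod_cast Nat.lt_succ_sqrt' N
  have hs0 : (0:ℝ) ≤ (s:ℝ) := Nat.cast_nonneg s
  have hsu : (s:ℝ) ≤ t^16 + 1 :=
    sqrt_upper hs0 (by positivity) hs1 (by linarith)
  have hsl : t^16 - 1 ≤ (s:ℝ) :=
    sqrt_lower hs0 (by positivity) hs2 (by linarith)
  set S₀ : ℕ := s + 1 with hS₀def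
  have hS₀l : t^16 ≤ (S₀:ℝ) := by rw [hS₀def]; push_cast; linarith
  have hS₀u : (S₀:ℝ) ≤ t^16 + 2 := by rw [hS₀def]; push_cast; linarith
  set s₁ : ℕ := Nat.sqrt S₀ with hs₁def
  have hs₁1 : ((s₁:ℝ))^2 ≤ (S₀:ℝ) := by exact_mod_cast Nat.sqrt_le' S₀
  have hs₁2 : (S₀:ℝ) < ((s₁:ℝ)+1)^2 := by exact_mod_cast Nat.lt_succ_sqrt' S₀
  have hs₁0 : (0:ℝ) ≤ (s₁:ℝ) := Nat.cast_nonneg s₁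
  have hs₁u : (s₁:ℝ) ≤ t^8 + 1 :=
    sqrt_upper hs₁0 (by positivity) hs₁1 (by linarith)
  have hs₁l : t^8 - 1 ≤ (s₁:ℝ) :=
    sqrt_lower hs₁0 (by positivity) hs₁2 (by linarith)
  -- M and a
  have hs₁S : (s₁:ℤ)^2 ≤ (S₀:ℤ) := by exact_mod_cast Nat.sqrt_le' S₀
  have hs₁S2 : (S₀:ℤ) < ((s₁:ℤ)+1)^2 := by exact_mod_cast Nat.lt_succ_sqrt' S₀
  set M : ℤ := 3*(s₁:ℤ) - ((S₀:ℤ) - (s₁:ℤ)^2) with hMdef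
  have hs₁0' : (0:ℤ) ≤ (s₁:ℤ) := Int.ofNat_nonneg s₁
  have hM1 : (s₁:ℤ) ≤ M := by rw [hMdef]; linarith
  have hM2 : M ≤ 3*(s₁:ℤ) := by rw [hMdef]; linarith
  have hM0 : 0 ≤ M := le_trans hs₁0' hM1
  have hMn : ((M.toNat : ℕ) : ℤ) = M := Int.toNat_of_nonneg hM0
  set a : ℕ := Nat.sqrt M.toNat with hadef
  have ha1 : ((a:ℤ))^2 ≤ M := by rw [← hMn]; exact_mod_cast Nat.sqrt_le' M.toNat
  have ha2 : M < ((a:ℤ)+1)^2 := by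
    conv_lhs => rw [← hMn]
    exact_mod_cast Nat.lt_succ_sqrt' M.toNat
  have hMr1 : (s₁:ℝ) ≤ ((M:ℤ):ℝ) := by exact_mod_cast hM1
  have hMr2 : ((M:ℤ):ℝ) ≤ 3*(s₁:ℝ) := by exact_mod_cast hM2
  have har1 : ((a:ℝ))^2 ≤ ((M:ℤ):ℝ) := by exact_mod_cast ha1
  have har2 : ((M:ℤ):ℝ) < ((a:ℝ)+1)^2 := by exact_mod_cast ha2
  have ha0 : (0:ℝ) ≤ (a:ℝ) := Nat.cast_nonneg a
  have haru : (a:ℝ) ≤ 2*t^4 :=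
    sqrt_upper ha0 (by positivity) har1 (by nlinarith)
  have harl : t^4 - 2 ≤ (a:ℝ) := by
    have := sqrt_lower ha0 (by linarith : (0:ℝ) ≤ t^4 - 1) har2 (by nlinarith)
    linarith
  have ht4big : (100:ℝ)^4 ≤ t^4 := h100k 4
  have ha2' : 2 ≤ a := by
    have h4 : (100000000:ℝ) ≤ t^4 := by norm_num at ht4big; linarith
    have h3 : (2:ℝ) < (a:ℝ) := by linarith
    exact_mod_cast h3.le
  have has₁ : a < s₁ := by
    have h3 : (a:ℝ) < (s₁:ℝ) := by linarith
    exact_mod_cast h3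
  -- G and H
  set G : ℕ := s₁ + 2 - a with hGdef
  set H : ℕ := s₁ + a + 1 with hHdef
  have hGcast : (G:ℤ) = (s₁:ℤ) + 2 - (a:ℤ) := by
    rw [hGdef]; push_cast [Nat.cast_sub (show a ≤ s₁ + 2 by omega)]; ring
  have hGr : (G:ℝ) = (s₁:ℝ) + 2 - (a:ℝ) := by exact_mod_cast hGcast
  have hHr : (H:ℝ) = (s₁:ℝ) + (a:ℝ) + 1 := by rw [hHdef]; push_cast; ring
  have hG1 : t^8/2 ≤ (G:ℝ) := by rw [hGr]; linarith
  have hG2 : (G:ℝ) ≤ 2*t^8 := by rw [hGr]; linarith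
  have hH1 : t^8 ≤ (H:ℝ) := by rw [hHr]; linarith
  have hH2 : (H:ℝ) ≤ 2*t^8 := by rw [hHr]; linarith
  have h1tk : ∀ k : ℕ, (1:ℝ) ≤ t^k := fun k => by
    simpa using pow_le_pow_left₀ (by norm_num : (0:ℝ) ≤ 1) hone k
  -- product identity G*H = S₀ + r
  set r : ℤ := M - (a:ℤ)^2 + (a:ℤ) + 2 with hrdef
  have hGH : (G:ℤ)*(H:ℤ) = (S₀:ℤ) + r := by
    rw [hrdef, hGcast, hMdef]; push_cast [hHdef]; ring
  have ha0' : (0:ℤ) ≤ (a:ℤ) := Int.ofNat_nonneg a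
  have hr1 : (a:ℤ) + 2 ≤ r := by rw [hrdef]; linarith
  have hr2 : r ≤ 3*(a:ℤ) + 2 := by rw [hrdef]; linarith
  have hr0 : (0:ℤ) ≤ r := by linarith
  have hrR : ((r:ℤ):ℝ) ≤ 7*t^4 := by
    have h3 : ((r:ℤ):ℝ) ≤ 3*(a:ℝ) + 2 := by exact_mod_cast hr2
    linarith
  have hr0R : (0:ℝ) ≤ ((r:ℤ):ℝ) := by exact_mod_cast hr0
  -- T
  set T : ℤ := ((G:ℤ)*(H:ℤ))^2 - (N:ℤ) with hTdef
  have hNs : ((N:ℕ):ℤ) < ((S₀:ℕ):ℤ)^2 := by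
    have : N < S₀^2 := by rw [hS₀def]; exact Nat.lt_succ_sqrt' N
    exact_mod_cast this
  have hS₀GH : ((S₀:ℕ):ℤ) ≤ (G:ℤ)*(H:ℤ) := by rw [hGH]; linarith
  have hS₀0 : (0:ℤ) ≤ ((S₀:ℕ):ℤ) := Int.ofNat_nonneg S₀
  have hT1 : 1 ≤ T := by
    rw [hTdef]
    have h1 : ((S₀:ℕ):ℤ)^2 ≤ ((G:ℤ)*(H:ℤ))^2 := pow_le_pow_left₀ hS₀0 hS₀GH 2
    linarith
  have hGHR : (G:ℝ)*(H:ℝ) = (S₀:ℝ) + ((r:ℤ):ℝ) := by exact_mod_cast hGH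
  have hmGH : ∀ gg hh : ℕ,
      (((G:ℤ)^2 - (hh:ℤ)^2) * ((H:ℤ)^2 - (gg:ℤ)^2) : ℤ)
        = (N:ℤ) + (T - ((G:ℤ)*gg)^2 - ((H:ℤ)*hh)^2 + ((gg:ℤ)*hh)^2) := by
    intro gg hh; rw [hTdef]; ring
  have hT0 : (0:ℤ) ≤ T := by linarith
  have hTn : ((T.toNat : ℕ) : ℤ) = T := Int.toNat_of_nonneg hT0
  set u : ℕ := Nat.sqrt T.toNat with hudef
  have hu1 : ((u:ℤ))^2 ≤ T := by rw [← hTn]; exact_mod_cast Nat.sqrt_le' T.toNat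
  have hu2 : T ≤ ((u:ℤ))^2 + 2*(u:ℤ) := by
    have h2 : T < ((u:ℤ)+1)^2 := by
      conv_lhs => rw [← hTn]
      exact_mod_cast Nat.lt_succ_sqrt' T.toNat
    linarith [h2]
  clear_value t N s S₀ s₁ M a G H r T u
  clear hsdef hs₁def hadef hudef hMn hTn htdef hNdef
  have hTr : ((T:ℤ):ℝ) = ((S₀:ℝ) + ((r:ℤ):ℝ))^2 - (N:ℝ) := by
    rw [hTdef]; push_cast
    linear_combination ((G:ℝ)*(H:ℝ) + (S₀:ℝ) + ((r:ℤ):ℝ)) * hGHR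
  have hsum : 4*t^16 + 49*t^8 + 28*t^4 + 5 ≤ t^20 := by
    have e1 : (100:ℝ)*t^16 ≤ t^17 := by simpa using hpow 16
    have e2 : (100:ℝ)*t^8 ≤ t^9 := by simpa using hpow 8
    have e3 : (100:ℝ)*t^4 ≤ t^5 := by simpa using hpow 4
    have e4 : (100:ℝ)*t^19 ≤ t^20 := by simpa using hpow 19
    have m1 : t^17 ≤ t^19 := hmono 17 19 (by norm_num)
    have m2 : t^9 ≤ t^19 := hmono 9 19 (by norm_num)
    have m3 : t^5 ≤ t^19 := hmono 5 19 (by norm_num)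
    have m4 : (1:ℝ) ≤ t^19 := h1tk 19
    have p1 : (0:ℝ) ≤ t^16 := by positivity
    have p2 : (0:ℝ) ≤ t^8 := by positivity
    have p3 : (0:ℝ) ≤ t^4 := by positivity
    linarith
  have hS₀0R : (0:ℝ) ≤ (S₀:ℝ) := Nat.cast_nonneg S₀
  have hTu : ((T:ℤ):ℝ) ≤ 15*t^20 := by
    rw [hTr]
    have hS₀r : (S₀:ℝ)*((r:ℤ):ℝ) ≤ (t^16+2)*(7*t^4) :=
      mul_le_mul hS₀u hrR hr0R (by positivity)
    have hrsq : ((r:ℤ):ℝ)^2 ≤ (7*t^4)^2 := sq_le_of_le hr0R hrR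
    have hS₀sq : (S₀:ℝ)^2 ≤ (t^16+2)^2 := sq_le_of_le hS₀0R hS₀u
    linarith [hNx, hsum, hS₀r, hrsq, hS₀sq]
  have hu0 : (0:ℝ) ≤ (u:ℝ) := Nat.cast_nonneg u
  have hu1R : (u:ℝ)^2 ≤ ((T:ℤ):ℝ) := by exact_mod_cast hu1
  have hu2R : ((T:ℤ):ℝ) ≤ (u:ℝ)^2 + 2*(u:ℝ) := by exact_mod_cast hu2
  have ht20 : (0:ℝ) ≤ t^20 := by positivity
  have huR : (u:ℝ) ≤ 4*t^10 :=
    sqrt_upper hu0 (by positivity) hu1R (by linarith [hTu, ht20])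
  have hT1R : (1:ℝ) ≤ ((T:ℤ):ℝ) := by exact_mod_cast hT1
  have hGpos : 0 < G := by
    have : (0:ℝ) < (G:ℝ) := by linarith
    exact_mod_cast this
  have hHpos : 0 < H := by
    have : (0:ℝ) < (H:ℝ) := by linarith
    exact_mod_cast this
  have hNxR1 : |(N:ℝ) - x| ≤ 1 := by rw [abs_le]; constructor <;> linarith
  have h1t17 : (1:ℝ) ≤ t^17 := h1tk 17
  have ht9 : (0:ℝ) ≤ t^9 := by positivity
  have ht10 : (0:ℝ) ≤ t^10 := by positivity
  have ht17 : (0:ℝ) ≤ t^17 := by positivity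
  have ht18 : (0:ℝ) ≤ t^18 := by positivity
  by_cases hcase : G ≤ u
  · -- main case : choose g = u / G
    set g : ℕ := u / G with hgdef
    have hg1 : 1 ≤ g := by rw [hgdef]; exact (Nat.one_le_div_iff hGpos).mpr hcase
    have hdm : G * g + u % G = u := by rw [hgdef]; exact Nat.div_add_mod u G
    have hmod : u % G < G := Nat.mod_lt u hGpos
    have hdmZ : (G:ℤ)*(g:ℤ) + ((u % G : ℕ):ℤ) = (u:ℤ) := by exact_mod_cast hdm
    have hmodZ : ((u % G : ℕ):ℤ) < (G:ℤ) := by exact_mod_cast hmod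
    have hmodZ0 : (0:ℤ) ≤ ((u % G : ℕ):ℤ) := Int.ofNat_nonneg _
    have hGg_le : (G:ℤ)*(g:ℤ) ≤ (u:ℤ) := by linarith
    have hGg_ge : (u:ℤ) - (G:ℤ) < (G:ℤ)*(g:ℤ) := by linarith
    have hGg0 : (0:ℤ) ≤ (G:ℤ)*(g:ℤ) := by positivity
    clear_value g
    have hGgR_le : (G:ℝ)*(g:ℝ) ≤ (u:ℝ) := by exact_mod_cast hGg_le
    have hGgR_ge : (u:ℝ) - (G:ℝ) ≤ (G:ℝ)*(g:ℝ) := by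
      have : (u:ℤ) - (G:ℤ) ≤ (G:ℤ)*(g:ℤ) := le_of_lt hGg_ge
      exact_mod_cast this
    have hGg0R : (0:ℝ) ≤ (G:ℝ)*(g:ℝ) := by positivity
    have hGg5 : (G:ℝ)*(g:ℝ) ≤ 5*t^10 := by linarith
    have hgr : (g:ℝ) ≤ 8*t^2 := by
      apply div_bound (Nat.cast_nonneg g) (by positivity : (0:ℝ) < t^8/2) hG1
      calc (G:ℝ)*(g:ℝ) ≤ 4*t^10 := by linarith
      _ = 8*t^2*(t^8/2) := by ring
    -- R
    set R : ℤ := T - ((G:ℤ)*(g:ℤ))^2 with hRdef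
    have hR0 : (0:ℤ) ≤ R := by
      rw [hRdef]
      have : ((G:ℤ)*(g:ℤ))^2 ≤ ((u:ℤ))^2 := pow_le_pow_left₀ hGg0 hGg_le 2
      linarith
    have hRR : ((R:ℤ):ℝ) = ((T:ℤ):ℝ) - ((G:ℝ)*(g:ℝ))^2 := by rw [hRdef]; push_cast; ring
    have huG : (u:ℝ)*(G:ℝ) ≤ 8*t^18 := by
      calc (u:ℝ)*(G:ℝ) ≤ (4*t^10)*(2*t^8) :=
        mul_le_mul huR hG2 (Nat.cast_nonneg G) (by positivity)
      _ = 8*t^18 := by ring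
    have hRu : ((R:ℤ):ℝ) ≤ 17*t^18 := by
      rw [hRR]
      have hb := Rbound hu2R (by linarith : (u:ℝ) - (G:ℝ)*(g:ℝ) ≤ (G:ℝ))
        hGgR_le hGg0R (Nat.cast_nonneg G)
      have e1 : (100:ℝ)*t^10 ≤ t^11 := by simpa using hpow 10
      have m1 : t^11 ≤ t^18 := hmono 11 18 (by norm_num)
      linarith [hb, huG, huR]
    have hRn : ((R.toNat : ℕ) : ℤ) = R := Int.toNat_of_nonneg hR0
    set v : ℕ := Nat.sqrt R.toNat with hvdef
    have hv1 : ((v:ℤ))^2 ≤ R := by rw [← hRn]; exact_mod_cast Nat.sqrt_le' R.toNat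
    have hv2 : R ≤ ((v:ℤ))^2 + 2*(v:ℤ) := by
      have h2 : R < ((v:ℤ)+1)^2 := by
        conv_lhs => rw [← hRn]
        exact_mod_cast Nat.lt_succ_sqrt' R.toNat
      linarith [h2]
    clear_value R v
    have hv0 : (0:ℝ) ≤ (v:ℝ) := Nat.cast_nonneg v
    have hv1R : (v:ℝ)^2 ≤ ((R:ℤ):ℝ) := by exact_mod_cast hv1
    have hv2R : ((R:ℤ):ℝ) ≤ (v:ℝ)^2 + 2*(v:ℝ) := by exact_mod_cast hv2
    have hvR : (v:ℝ) ≤ 5*t^9 :=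
      sqrt_upper hv0 (by positivity) hv1R (by linarith [hRu, ht18])
    by_cases hcase2 : H ≤ v
    · -- case A1
      set h : ℕ := v / H with hhdef
      have hh1 : 1 ≤ h := by rw [hhdef]; exact (Nat.one_le_div_iff hHpos).mpr hcase2
      have hdm2 : H * h + v % H = v := by rw [hhdef]; exact Nat.div_add_mod v H
      have hmod2 : v % H < H := Nat.mod_lt v hHpos
      have hdm2Z : (H:ℤ)*(h:ℤ) + ((v % H : ℕ):ℤ) = (v:ℤ) := by exact_mod_cast hdm2
      have hmod2Z : ((v % H : ℕ):ℤ) < (H:ℤ) := by exact_mod_cast hmod2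
      have hmod2Z0 : (0:ℤ) ≤ ((v % H : ℕ):ℤ) := Int.ofNat_nonneg _
      have hHh_le : (H:ℤ)*(h:ℤ) ≤ (v:ℤ) := by linarith
      have hHh0 : (0:ℤ) ≤ (H:ℤ)*(h:ℤ) := by positivity
      have hHhR_le : (H:ℝ)*(h:ℝ) ≤ (v:ℝ) := by exact_mod_cast hHh_le
      have hHhR_ge : (v:ℝ) - (H:ℝ) ≤ (H:ℝ)*(h:ℝ) := by
        have : (v:ℤ) - (H:ℤ) ≤ (H:ℤ)*(h:ℤ) := by linarith
        exact_mod_cast this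
      have hHh0R : (0:ℝ) ≤ (H:ℝ)*(h:ℝ) := by positivity
      clear_value h
      have ht910 : t^9 ≤ t^10 := hmono 9 10 (by norm_num)
      have hHh5 : (H:ℝ)*(h:ℝ) ≤ 5*t^10 := by linarith
      have hhr : (h:ℝ) ≤ 5*t := by
        apply div_bound (Nat.cast_nonneg h) ht8 hH1
        calc (H:ℝ)*(h:ℝ) ≤ 5*t^9 := by linarith
        _ = 5*t*(t^8) := by ring
      -- error bound
      have hvH : (v:ℝ)*(H:ℝ) ≤ 10*t^17 := by
        calc (v:ℝ)*(H:ℝ) ≤ (5*t^9)*(2*t^8) :=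
          mul_le_mul hvR hH2 (Nat.cast_nonneg H) (by positivity)
        _ = 10*t^17 := by ring
      have hEup : ((R:ℤ):ℝ) - ((H:ℝ)*(h:ℝ))^2 ≤ 21*t^17 := by
        have hb := Rbound hv2R (by linarith : (v:ℝ) - (H:ℝ)*(h:ℝ) ≤ (H:ℝ))
          hHhR_le hHh0R (Nat.cast_nonneg H)
        have e1 : (100:ℝ)*t^9 ≤ t^10 := by simpa using hpow 9
        have m1 : t^10 ≤ t^17 := hmono 10 17 (by norm_num)
        linarith [hb, hvH, hvR]
      have hElo : (0:ℝ) ≤ ((R:ℤ):ℝ) - ((H:ℝ)*(h:ℝ))^2 := by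
        have : ((H:ℝ)*(h:ℝ))^2 ≤ (v:ℝ)^2 := sq_le_of_le hHh0R hHhR_le
        linarith
      have hgh : (g:ℝ)*(h:ℝ) ≤ 40*t^3 := by
        calc (g:ℝ)*(h:ℝ) ≤ (8*t^2)*(5*t) :=
          mul_le_mul hgr hhr (Nat.cast_nonneg h) (by positivity)
        _ = 40*t^3 := by ring
      have hghsq : ((g:ℝ)*(h:ℝ))^2 ≤ t^8 := by
        have h1 : ((g:ℝ)*(h:ℝ))^2 ≤ (40*t^3)^2 :=
          sq_le_of_le (by positivity) hgh
        have h2 : (1600:ℝ) ≤ t^2 := by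
          have h100 := h100k 2; norm_num at h100; linarith
        have h3 : 1600*t^6 ≤ t^2*t^6 := mul_le_mul_of_nonneg_right h2 (pow_nonneg ht0.le 6)
        linarith [h1, h3]
      have ht817 : t^8 ≤ t^17 := hmono 8 17 (by norm_num)
      -- conclude
      refine ⟨((G:ℤ)^2 - (h:ℤ)^2) * ((H:ℤ)^2 - (g:ℤ)^2), ?_⟩
      have hE : (((((G:ℤ)^2 - (h:ℤ)^2) * ((H:ℤ)^2 - (g:ℤ)^2) : ℤ)):ℝ)
          = (N:ℝ) + (((T:ℤ):ℝ) - ((G:ℝ)*(g:ℝ))^2 - ((H:ℝ)*(h:ℝ))^2 + ((g:ℝ)*(h:ℝ))^2) := by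
        rw [hmGH g h]; push_cast; ring
      have herr : |(((((G:ℤ)^2 - (h:ℤ)^2) * ((H:ℤ)^2 - (g:ℤ)^2)) : ℤ) : ℝ) - x| ≤ 32*t^17 := by
        rw [hE, abs_le]
        have hN' := abs_le.mp hNxR1
        rw [hRR] at hEup hElo
        constructor <;> linarith [hN'.1, hN'.2, hghsq, hEup, hElo, ht817, h1t17, ht17,
          mul_nonneg (Nat.cast_nonneg g (α := ℝ)) (Nat.cast_nonneg h (α := ℝ)),
          sq_nonneg ((g:ℝ)*(h:ℝ))]
      exact key x θ t G H g h ht hxt hθ1 hg1 hh1 hG1 hG2 hH1 hH2 hGg5 hHh5 hgr hhr herr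
    · -- case A2 : v < H, take h = 1
      push_neg at hcase2
      obtain ⟨h, hhdef⟩ : ∃ h : ℕ, h = 1 := ⟨1, rfl⟩
      have hh1 : 1 ≤ h := by rw [hhdef]
      have hhR : (h:ℝ) = 1 := by rw [hhdef]; norm_num
      have hhZ : (h:ℤ) = 1 := by rw [hhdef]; norm_num
      have hHh5 : (H:ℝ)*(h:ℝ) ≤ 5*t^10 := by
        have h810 : t^8 ≤ t^10 := hmono 8 10 (by norm_num)
        rw [hhR]; linarith
      have hhr : (h:ℝ) ≤ 5*t := by rw [hhR]; linarith
      have hvH : ((v:ℤ)+1)^2 ≤ ((H:ℤ))^2 := by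
        have : (v:ℤ)+1 ≤ (H:ℤ) := by exact_mod_cast hcase2
        exact pow_le_pow_left₀ (by positivity) this 2
      have hRH : R ≤ ((H:ℤ))^2 := by linarith [hv2, hvH]
      have hRHR : ((R:ℤ):ℝ) ≤ ((H:ℝ))^2 := by exact_mod_cast hRH
      have hR0R : (0:ℝ) ≤ ((R:ℤ):ℝ) := by exact_mod_cast hR0
      have hHsq : ((H:ℝ))^2 ≤ 4*t^16 := by
        have := sq_le_of_le (Nat.cast_nonneg H) hH2; linarith
      have hgsq : ((g:ℝ))^2 ≤ 64*t^4 := by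
        have := sq_le_of_le (Nat.cast_nonneg g) hgr; linarith
      have h16t : 4*t^16 + 64*t^4 + 2 ≤ 31*t^17 := by
        have e1 : (100:ℝ)*t^16 ≤ t^17 := by simpa using hpow 16
        have m1 : t^4 ≤ t^16 := hmono 4 16 (by norm_num)
        have p1 : (0:ℝ) ≤ t^16 := by positivity
        linarith
      refine ⟨((G:ℤ)^2 - (h:ℤ)^2) * ((H:ℤ)^2 - (g:ℤ)^2), ?_⟩
      have hE : (((((G:ℤ)^2 - (h:ℤ)^2) * ((H:ℤ)^2 - (g:ℤ)^2) : ℤ)):ℝ)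
          = (N:ℝ) + (((T:ℤ):ℝ) - ((G:ℝ)*(g:ℝ))^2 - ((H:ℝ)*(h:ℝ))^2 + ((g:ℝ)*(h:ℝ))^2) := by
        rw [hmGH g h]; push_cast; ring
      have herr : |(((((G:ℤ)^2 - (h:ℤ)^2) * ((H:ℤ)^2 - (g:ℤ)^2)) : ℤ) : ℝ) - x| ≤ 32*t^17 := by
        rw [hE, abs_le]
        have hN' := abs_le.mp hNxR1
        have hTgR : ((T:ℤ):ℝ) - ((G:ℝ)*(g:ℝ))^2 = ((R:ℤ):ℝ) := by rw [hRR]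
        rw [hhR]
        constructor <;>
        · rw [show ((T:ℤ):ℝ) - ((G:ℝ)*(g:ℝ))^2 - ((H:ℝ)*1)^2 + ((g:ℝ)*1)^2
              = (((T:ℤ):ℝ) - ((G:ℝ)*(g:ℝ))^2) - ((H:ℝ))^2 + ((g:ℝ))^2 by ring, hTgR]
          linarith [hN'.1, hN'.2, hRHR, hR0R, hHsq, hgsq, h16t, h1t17, ht17,
            sq_nonneg ((g:ℝ))]
      exact key x θ t G H g h ht hxt hθ1 hg1 hh1 hG1 hG2 hH1 hH2 hGg5 hHh5 hgr hhr herr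
  · -- case B : u < G, take g = h = 1
    push_neg at hcase
    obtain ⟨g, hgdef⟩ : ∃ g : ℕ, g = 1 := ⟨1, rfl⟩
    obtain ⟨h, hhdef⟩ : ∃ h : ℕ, h = 1 := ⟨1, rfl⟩
    have hg1 : 1 ≤ g := by rw [hgdef]
    have hh1 : 1 ≤ h := by rw [hhdef]
    have hgR : (g:ℝ) = 1 := by rw [hgdef]; norm_num
    have hhR : (h:ℝ) = 1 := by rw [hhdef]; norm_num
    have ht810 : t^8 ≤ t^10 := hmono 8 10 (by norm_num)
    have hGg5 : (G:ℝ)*(g:ℝ) ≤ 5*t^10 := by rw [hgR]; linarith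
    have hHh5 : (H:ℝ)*(h:ℝ) ≤ 5*t^10 := by rw [hhR]; linarith
    have hgr : (g:ℝ) ≤ 8*t^2 := by
      rw [hgR]; have := h1tk 2; linarith
    have hhr : (h:ℝ) ≤ 5*t := by rw [hhR]; linarith
    have huG : ((u:ℤ)+1)^2 ≤ ((G:ℤ))^2 := by
      have : (u:ℤ)+1 ≤ (G:ℤ) := by exact_mod_cast hcase
      exact pow_le_pow_left₀ (by positivity) this 2
    have hTG : T ≤ ((G:ℤ))^2 := by linarith [hu2, huG]
    have hTGR : ((T:ℤ):ℝ) ≤ ((G:ℝ))^2 := by exact_mod_cast hTG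
    have hGsq : ((G:ℝ))^2 ≤ 4*t^16 := by
      have := sq_le_of_le (Nat.cast_nonneg G) hG2; linarith
    have hHsq : ((H:ℝ))^2 ≤ 4*t^16 := by
      have := sq_le_of_le (Nat.cast_nonneg H) hH2; linarith
    have h16t : 9*t^16 + 2 ≤ 31*t^17 := by
      have e1 : (100:ℝ)*t^16 ≤ t^17 := by simpa using hpow 16
      have p1 : (0:ℝ) ≤ t^16 := by positivity
      linarith
    refine ⟨((G:ℤ)^2 - (h:ℤ)^2) * ((H:ℤ)^2 - (g:ℤ)^2), ?_⟩
    have hE : (((((G:ℤ)^2 - (h:ℤ)^2) * ((H:ℤ)^2 - (g:ℤ)^2) : ℤ)):ℝ)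
        = (N:ℝ) + (((T:ℤ):ℝ) - ((G:ℝ)*(g:ℝ))^2 - ((H:ℝ)*(h:ℝ))^2 + ((g:ℝ)*(h:ℝ))^2) := by
      rw [hmGH g h]; push_cast; ring
    have herr : |(((((G:ℤ)^2 - (h:ℤ)^2) * ((H:ℤ)^2 - (g:ℤ)^2)) : ℤ) : ℝ) - x| ≤ 32*t^17 := by
      rw [hE, abs_le]
      have hN' := abs_le.mp hNxR1
      rw [hgR, hhR]
      constructor <;> linarith [hN'.1, hN'.2, hTGR, hT1R, hGsq, hHsq, h16t, h1t17, ht17,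
        sq_nonneg ((G:ℝ)), sq_nonneg ((H:ℝ))]
    exact key x θ t G H g h ht hxt hθ1 hg1 hh1 hG1 hG2 hH1 hH2 hGg5 hHh5 hgr hhr herr

end Main
end

section
/- Let 1/2 < φ < 2/3. For all sufficiently large real x there exist positive integers G, H, g, h with G ∈ [x^{(1−φ)/2}/2, x^{(1−φ)/2}], H ∈ [x^{φ/2}, 3x^{φ/2}], g ≍ x^{1/2 − 3φ/4}, h ≍ x^{5φ/8 − 1/4}, such that |x − (G − g)(G + g)(H − h)(H + h)| ≤ C·x^{3/4 − 3φ/8} and all four products (G ± g)(H ± h) lie within C·x^{1/2 − φ/4} of x^{1/2}, for some constant C > 0 depending only on φ. -/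
lemma rpow_aux {c t : ℝ} (hc : 1 ≤ c) (ht : 0 < t) {x : ℝ} (hx : c ^ t⁻¹ ≤ x) :
    c ≤ x ^ t := by
  have hc0 : (0:ℝ) ≤ c := le_trans zero_le_one hc
  have h1 : c = (c ^ t⁻¹) ^ t := by
    rw [← Real.rpow_mul hc0, inv_mul_cancel₀ ht.ne', Real.rpow_one]
  rw [h1]
  exact Real.rpow_le_rpow (Real.rpow_nonneg hc0 _) hx ht.le

set_option maxHeartbeats 2000000 in
theorem type2_construction_phi (φ : ℝ) (hφ1 : 1/2 < φ) (hφ2 : φ < 2/3) :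
    ∃ C : ℝ, C > 0 ∧ ∃ x0 : ℝ, ∀ x : ℝ, x ≥ x0 →
      ∃ G H g h : ℤ, 0 < G ∧ 0 < H ∧ 0 < g ∧ 0 < h ∧
        x ^ ((1 - φ)/2) / 2 ≤ (G : ℝ) ∧ (G : ℝ) ≤ x ^ ((1 - φ)/2) ∧
        x ^ (φ/2) ≤ (H : ℝ) ∧ (H : ℝ) ≤ 3 * x ^ (φ/2) ∧
        x ^ ((1:ℝ)/2 - 3*φ/4) / C ≤ (g : ℝ) ∧ (g : ℝ) ≤ C * x ^ ((1:ℝ)/2 - 3*φ/4) ∧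
        x ^ (5*φ/8 - (1:ℝ)/4) / C ≤ (h : ℝ) ∧ (h : ℝ) ≤ C * x ^ (5*φ/8 - (1:ℝ)/4) ∧
        |x - ((G : ℝ) - g) * ((G : ℝ) + g) * (((H : ℝ) - h) * ((H : ℝ) + h))| ≤
          C * x ^ ((3:ℝ)/4 - 3*φ/8) ∧
        |((G : ℝ) - g) * ((H : ℝ) - h) - x ^ ((1:ℝ)/2)| ≤ C * x ^ ((1:ℝ)/2 - φ/4) ∧
        |((G : ℝ) + g) * ((H : ℝ) + h) - x ^ ((1:ℝ)/2)| ≤ C * x ^ ((1:ℝ)/2 - φ/4) ∧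
        |((G : ℝ) - g) * ((H : ℝ) + h) - x ^ ((1:ℝ)/2)| ≤ C * x ^ ((1:ℝ)/2 - φ/4) ∧
        |((G : ℝ) + g) * ((H : ℝ) - h) - x ^ ((1:ℝ)/2)| ≤ C * x ^ ((1:ℝ)/2 - φ/4) := by
  have hα : 0 < (1 - φ)/2 := by linarith
  have hβ : 0 < φ/2 := by linarith
  have hγp : 0 < (1:ℝ)/2 - 3*φ/4 := by linarith
  have hδp : 0 < 5*φ/8 - (1:ℝ)/4 := by linarith
  refine ⟨2000, by norm_num,
    max 1 (max (max ((2:ℝ) ^ ((1 - φ)/2)⁻¹) ((2:ℝ) ^ (φ/2)⁻¹))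
      (max ((24:ℝ) ^ ((1:ℝ)/2 - 3*φ/4)⁻¹) ((2:ℝ) ^ (5*φ/8 - (1:ℝ)/4)⁻¹))), ?_⟩
  intro x hx
  have hx1 : 1 ≤ x := le_trans (le_max_left _ _) hx
  have hx0 : 0 < x := lt_of_lt_of_le one_pos hx1
  have hxr : ∀ e : ℝ, e ≤ max (max ((2:ℝ) ^ ((1 - φ)/2)⁻¹) ((2:ℝ) ^ (φ/2)⁻¹))
      (max ((24:ℝ) ^ ((1:ℝ)/2 - 3*φ/4)⁻¹) ((2:ℝ) ^ (5*φ/8 - (1:ℝ)/4)⁻¹)) → e ≤ x :=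
    fun e he => le_trans he (le_trans (le_max_right _ _) hx)
  set A := x ^ ((1 - φ)/2) with hAdef
  set B := x ^ (φ/2) with hBdef
  set S := x ^ ((1:ℝ)/2) with hSdef
  set Pg := x ^ ((1:ℝ)/2 - 3*φ/4) with hPgdef
  set Pd := x ^ (5*φ/8 - (1:ℝ)/4) with hPddef
  set Pl := x ^ ((1:ℝ)/2 - φ/4) with hPldef
  set Pm := x ^ ((1:ℝ)/4 + φ/8) with hPmdef
  set Pe := x ^ ((3:ℝ)/4 - 3*φ/8) with hPedef
  have hA2 : 2 ≤ A := rpow_aux one_le_two hα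
    (hxr _ (le_trans (le_max_left _ _) (le_max_left _ _)))
  have hB2 : 2 ≤ B := rpow_aux one_le_two hβ
    (hxr _ (le_trans (le_max_right _ _) (le_max_left _ _)))
  have hPg24 : 24 ≤ Pg := rpow_aux (by norm_num) hγp
    (hxr _ (le_trans (le_max_left _ _) (le_max_right _ _)))
  have hPd2 : 2 ≤ Pd := rpow_aux one_le_two hδp
    (hxr _ (le_trans (le_max_right _ _) (le_max_right _ _)))
  have hA0 : (0:ℝ) < A := by linarith
  have hB0 : (0:ℝ) < B := by linarith
  have hS0 : (0:ℝ) < S := Real.rpow_pos_of_pos hx0 _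
  have hPg0 : (0:ℝ) < Pg := by linarith
  have hPd0 : (0:ℝ) < Pd := by linarith
  have hPl0 : (0:ℝ) < Pl := Real.rpow_pos_of_pos hx0 _
  have hPm0 : (0:ℝ) < Pm := Real.rpow_pos_of_pos hx0 _
  have hPe0 : (0:ℝ) < Pe := Real.rpow_pos_of_pos hx0 _
  -- multiplicative relations between the powers
  have f1 : A * B = S := by
    rw [hAdef, hBdef, hSdef, ← Real.rpow_add hx0]; congr 1; ring
  have f2 : Pl * Pl = A * S := by
    rw [hAdef, hSdef, hPldef, ← Real.rpow_add hx0, ← Real.rpow_add hx0]; congr 1; ring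
  have f3 : Pg * B = Pl := by
    rw [hPgdef, hBdef, hPldef, ← Real.rpow_add hx0]; congr 1; ring
  have f4 : Pm * Pm = B * Pl := by
    rw [hPmdef, hBdef, hPldef, ← Real.rpow_add hx0, ← Real.rpow_add hx0]; congr 1; ring
  have f5 : Pd * A = Pm := by
    rw [hPddef, hAdef, hPmdef, ← Real.rpow_add hx0]; congr 1; ring
  have f6 : (Pg * Pd) * (Pg * Pd) = Pl := by
    rw [hPgdef, hPddef, hPldef]
    rw [← Real.rpow_add hx0, ← Real.rpow_add hx0]; congr 1; ring
  have f7 : A * Pm = Pe := by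
    rw [hAdef, hPmdef, hPedef, ← Real.rpow_add hx0]; congr 1; ring
  -- comparisons (valid for x ≥ 1)
  have cAS : A ≤ S := Real.rpow_le_rpow_of_exponent_le hx1 (by linarith)
  have c1 : A ≤ Pl := Real.rpow_le_rpow_of_exponent_le hx1 (by linarith)
  have c2 : A * Pd ≤ Pl := by
    rw [hAdef, hPddef, hPldef, ← Real.rpow_add hx0]
    exact Real.rpow_le_rpow_of_exponent_le hx1 (by linarith)
  have c3 : Pg * Pd ≤ Pl := by
    rw [hPgdef, hPddef, hPldef, ← Real.rpow_add hx0]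
    exact Real.rpow_le_rpow_of_exponent_le hx1 (by linarith)
  have c4 : Pl ≤ Pe := Real.rpow_le_rpow_of_exponent_le hx1 (by linarith)
  have hxS : S * S = x := by
    rw [hSdef, ← Real.rpow_add hx0]; norm_num
  -- G
  set Gz : ℤ := ⌊A⌋ with hGzdef
  have hGr_le : (Gz:ℝ) ≤ A := Int.floor_le A
  have hGr_lo : A/2 ≤ (Gz:ℝ) := by
    have := Int.sub_one_lt_floor A; rw [← hGzdef] at this; linarith
  have hGr0 : (0:ℝ) < (Gz:ℝ) := by linarith
  have hG0 : 0 < Gz := by exact_mod_cast hGr0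
  -- H
  set Hz : ℤ := ⌊S/(Gz:ℝ)⌋ + 2 with hHzdef
  have hHr_hi : (Hz:ℝ) ≤ S/(Gz:ℝ) + 2 := by
    have := Int.floor_le (S/(Gz:ℝ)); rw [hHzdef]; push_cast; linarith
  have hHr_lo : S/(Gz:ℝ) + 1 < (Hz:ℝ) := by
    have := Int.sub_one_lt_floor (S/(Gz:ℝ)); rw [hHzdef]; push_cast; linarith
  have hT_lo : B ≤ S/(Gz:ℝ) := by
    have h1 : S/A ≤ S/(Gz:ℝ) := by gcongr
    have h2 : S/A = B := by rw [← f1, mul_comm, mul_div_assoc, div_self hA0.ne', mul_one]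
    linarith
  have hT_hi : S/(Gz:ℝ) ≤ 2*B := by
    have h1 : S/(Gz:ℝ) ≤ S/(A/2) := by gcongr
    have h2 : S/(A/2) = 2*B := by
      rw [← f1]; field_simp
    linarith
  have hHB1 : B ≤ (Hz:ℝ) := by linarith
  have hHB2 : (Hz:ℝ) ≤ 3*B := by linarith
  have hHr0 : (0:ℝ) < (Hz:ℝ) := by linarith
  have hH0 : 0 < Hz := by exact_mod_cast hHr0
  -- W = G*H
  have hGT : (Gz:ℝ) * (S/(Gz:ℝ)) = S := by field_simp
  have hW_lo : S + (Gz:ℝ) < (Gz:ℝ)*(Hz:ℝ) := by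
    have h := (mul_lt_mul_iff_right₀ hGr0).mpr hHr_lo
    rw [mul_add, hGT, mul_one] at h; exact h
  have hW_hi : (Gz:ℝ)*(Hz:ℝ) ≤ S + 2*(Gz:ℝ) := by
    have h := (mul_le_mul_iff_right₀ hGr0).mpr hHr_hi
    rw [mul_add, hGT] at h; linarith
  -- L
  set L : ℝ := ((Gz:ℝ)*(Hz:ℝ))^2 - x with hLdef
  have hL_lo : A*S ≤ L := by
    have h1 : A/2 ≤ (Gz:ℝ)*(Hz:ℝ) - S := by linarith
    have h2 : 2*S ≤ (Gz:ℝ)*(Hz:ℝ) + S := by linarith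
    have h3 : A/2 * (2*S) ≤ ((Gz:ℝ)*(Hz:ℝ) - S)*((Gz:ℝ)*(Hz:ℝ) + S) :=
      mul_le_mul h1 h2 (by linarith) (by linarith)
    calc A*S = A/2 * (2*S) := by ring
      _ ≤ ((Gz:ℝ)*(Hz:ℝ) - S)*((Gz:ℝ)*(Hz:ℝ) + S) := h3
      _ = ((Gz:ℝ)*(Hz:ℝ))^2 - S*S := by ring
      _ = L := by rw [hxS, hLdef]
  have hL_hi : L ≤ 8*(A*S) := by
    have h1 : (Gz:ℝ)*(Hz:ℝ) - S ≤ 2*A := by linarith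
    have h2 : (Gz:ℝ)*(Hz:ℝ) + S ≤ 4*S := by linarith
    have h3 : ((Gz:ℝ)*(Hz:ℝ) - S)*((Gz:ℝ)*(Hz:ℝ) + S) ≤ (2*A)*(4*S) :=
      mul_le_mul h1 h2 (by linarith) (by linarith)
    calc L = ((Gz:ℝ)*(Hz:ℝ))^2 - S*S := by rw [hxS, hLdef]
      _ = ((Gz:ℝ)*(Hz:ℝ) - S)*((Gz:ℝ)*(Hz:ℝ) + S) := by ring
      _ ≤ (2*A)*(4*S) := h3
      _ = 8*(A*S) := by ring
  have hL0 : (0:ℝ) ≤ L := le_trans (by positivity) hL_lo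
  set R : ℝ := Real.sqrt L with hRdef
  have hR2 : R * R = L := Real.mul_self_sqrt hL0
  have hR0 : (0:ℝ) ≤ R := Real.sqrt_nonneg L
  have hR_lo : Pl ≤ R := by
    have h1 : Real.sqrt (Pl*Pl) ≤ Real.sqrt L := Real.sqrt_le_sqrt (by rw [f2]; exact hL_lo)
    rwa [Real.sqrt_mul_self hPl0.le] at h1
  have hR_hi : R ≤ 3*Pl := by
    have h1 : Real.sqrt L ≤ Real.sqrt ((3*Pl)*(3*Pl)) := Real.sqrt_le_sqrt (by linarith [f2, hL_hi, mul_pos hPl0 hPl0])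
    rwa [Real.sqrt_mul_self (by linarith)] at h1
  -- g
  set gz : ℤ := ⌊R/(Hz:ℝ)⌋ - 1 with hgzdef
  have hg_hi : (gz:ℝ) ≤ R/(Hz:ℝ) - 1 := by
    have := Int.floor_le (R/(Hz:ℝ)); rw [hgzdef]; push_cast; linarith
  have hg_lo : R/(Hz:ℝ) - 2 < (gz:ℝ) := by
    have := Int.sub_one_lt_floor (R/(Hz:ℝ)); rw [hgzdef]; push_cast; linarith
  have hRH_lo : Pg/3 ≤ R/(Hz:ℝ) := by
    have h1 : Pl/(3*B) ≤ R/(Hz:ℝ) := by gcongr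
    have h2 : Pl/(3*B) = Pg/3 := by rw [← f3]; field_simp
    linarith
  have hRH_hi : R/(Hz:ℝ) ≤ 3*Pg := by
    have h1 : R/(Hz:ℝ) ≤ (3*Pl)/B := by gcongr
    have h2 : (3*Pl)/B = 3*Pg := by rw [← f3]; field_simp
    linarith
  have hgr_lo : Pg/4 ≤ (gz:ℝ) := by linarith
  have hgr_hi : (gz:ℝ) ≤ 3*Pg := by linarith
  have hgr0 : (0:ℝ) < (gz:ℝ) := by linarith
  have hg0 : 0 < gz := by exact_mod_cast hgr0
  have hgH1 : (gz:ℝ)*(Hz:ℝ) ≤ R - (Hz:ℝ) := by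
    have h := (mul_le_mul_iff_left₀ hHr0).mpr hg_hi
    rw [sub_mul, div_mul_cancel₀ _ hHr0.ne', one_mul] at h; exact h
  have hgH2 : R - 2*(Hz:ℝ) < (gz:ℝ)*(Hz:ℝ) := by
    have h := (mul_lt_mul_iff_left₀ hHr0).mpr hg_lo
    rw [sub_mul, div_mul_cancel₀ _ hHr0.ne'] at h; linarith
  have hgH0 : (0:ℝ) ≤ (gz:ℝ)*(Hz:ℝ) := by positivity
  -- M
  set M : ℝ := L - (gz:ℝ)^2*(Hz:ℝ)^2 with hMdef
  have hMfac : M = (R - (gz:ℝ)*(Hz:ℝ))*(R + (gz:ℝ)*(Hz:ℝ)) := by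
    rw [hMdef, ← hR2]; ring
  have hM_lo : Pm*Pm ≤ M := by
    rw [hMfac]
    calc Pm*Pm = B*Pl := f4
      _ ≤ (Hz:ℝ)*R := mul_le_mul hHB1 hR_lo hPl0.le (by linarith)
      _ ≤ (R - (gz:ℝ)*(Hz:ℝ))*(R + (gz:ℝ)*(Hz:ℝ)) := by
          apply mul_le_mul (by linarith) (by linarith) hR0 (by linarith)
  have hM_hi : M ≤ 36*(Pm*Pm) := by
    rw [hMfac]
    have h1 : R - (gz:ℝ)*(Hz:ℝ) ≤ 2*(Hz:ℝ) := by linarith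
    have h2 : R + (gz:ℝ)*(Hz:ℝ) ≤ 2*R := by linarith
    calc (R - (gz:ℝ)*(Hz:ℝ))*(R + (gz:ℝ)*(Hz:ℝ)) ≤ (2*(Hz:ℝ))*(2*R) :=
          mul_le_mul h1 h2 (by linarith) (by linarith)
      _ ≤ (2*(3*B))*(2*(3*Pl)) := by
          apply mul_le_mul (by linarith) (by linarith) (by linarith) (by linarith)
      _ = 36*(B*Pl) := by ring
      _ = 36*(Pm*Pm) := by rw [f4]
  have hM0 : (0:ℝ) ≤ M := le_trans (by positivity) hM_lo
  set Tm : ℝ := Real.sqrt M with hTmdef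
  have hTm2 : Tm * Tm = M := Real.mul_self_sqrt hM0
  have hTm0 : (0:ℝ) ≤ Tm := Real.sqrt_nonneg M
  have hTm_lo : Pm ≤ Tm := by
    have h1 : Real.sqrt (Pm*Pm) ≤ Real.sqrt M := Real.sqrt_le_sqrt hM_lo
    rwa [Real.sqrt_mul_self hPm0.le] at h1
  have hTm_hi : Tm ≤ 6*Pm := by
    have h1 : Real.sqrt M ≤ Real.sqrt ((6*Pm)*(6*Pm)) := Real.sqrt_le_sqrt (by linarith [hM_hi, mul_pos hPm0 hPm0])
    rwa [Real.sqrt_mul_self (by linarith)] at h1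
  -- h
  set hz : ℤ := ⌊Tm/(Gz:ℝ)⌋ with hhzdef
  have hh_hi : (hz:ℝ) ≤ Tm/(Gz:ℝ) := by rw [hhzdef]; exact Int.floor_le _
  have hh_lo : Tm/(Gz:ℝ) - 1 < (hz:ℝ) := by
    have := Int.sub_one_lt_floor (Tm/(Gz:ℝ)); rw [hhzdef]; exact this
  have hTG_lo : Pd ≤ Tm/(Gz:ℝ) := by
    have h1 : Pm/A ≤ Tm/(Gz:ℝ) := by gcongr
    have h2 : Pm/A = Pd := by rw [← f5, mul_div_assoc, div_self hA0.ne', mul_one]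
    linarith
  have hTG_hi : Tm/(Gz:ℝ) ≤ 12*Pd := by
    have h1 : Tm/(Gz:ℝ) ≤ (6*Pm)/(A/2) := by gcongr
    have h2 : (6*Pm)/(A/2) = 12*Pd := by rw [← f5]; field_simp; ring
    linarith
  have hhr_lo : Pd/2 ≤ (hz:ℝ) := by linarith
  have hhr_hi : (hz:ℝ) ≤ 12*Pd := by linarith
  have hhr0 : (0:ℝ) < (hz:ℝ) := by linarith
  have hh0 : 0 < hz := by exact_mod_cast hhr0
  have hhG1 : (hz:ℝ)*(Gz:ℝ) ≤ Tm := by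
    have h := (mul_le_mul_iff_left₀ hGr0).mpr hh_hi
    rwa [div_mul_cancel₀ _ hGr0.ne'] at h
  have hhG2 : Tm - (Gz:ℝ) < (hz:ℝ)*(Gz:ℝ) := by
    have h := (mul_lt_mul_iff_left₀ hGr0).mpr hh_lo
    rw [sub_mul, div_mul_cancel₀ _ hGr0.ne', one_mul] at h; linarith
  have hhG0 : (0:ℝ) ≤ (hz:ℝ)*(Gz:ℝ) := by positivity
  -- N
  set N : ℝ := M - (hz:ℝ)^2*(Gz:ℝ)^2 with hNdef
  have hNfac : N = (Tm - (hz:ℝ)*(Gz:ℝ))*(Tm + (hz:ℝ)*(Gz:ℝ)) := by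
    rw [hNdef, ← hTm2]; ring
  have hN0 : (0:ℝ) ≤ N := by
    rw [hNfac]
    exact mul_nonneg (by linarith) (by linarith)
  have hN_hi : N ≤ 12*Pe := by
    rw [hNfac]
    calc (Tm - (hz:ℝ)*(Gz:ℝ))*(Tm + (hz:ℝ)*(Gz:ℝ)) ≤ (Gz:ℝ)*(2*Tm) :=
          mul_le_mul (by linarith) (by linarith) (by linarith) (by linarith)
      _ ≤ A*(2*(6*Pm)) := by
          apply mul_le_mul hGr_le (by linarith) (by linarith) (by linarith)
      _ = 12*(A*Pm) := by ring
      _ = 12*Pe := by rw [f7]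
  -- bound on g*h
  have hgh : (gz:ℝ)*(hz:ℝ) ≤ 36*(Pg*Pd) := by
    calc (gz:ℝ)*(hz:ℝ) ≤ (3*Pg)*(12*Pd) :=
          mul_le_mul hgr_hi hhr_hi (by linarith) (by linarith)
      _ = 36*(Pg*Pd) := by ring
  have hgh0 : (0:ℝ) ≤ (gz:ℝ)*(hz:ℝ) := by positivity
  have hghsq : (gz:ℝ)^2*(hz:ℝ)^2 ≤ 1296*Pl := by
    have h1 : ((gz:ℝ)*(hz:ℝ))*((gz:ℝ)*(hz:ℝ)) ≤ (36*(Pg*Pd))*(36*(Pg*Pd)) :=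
      mul_le_mul hgh hgh hgh0 (by positivity)
    calc (gz:ℝ)^2*(hz:ℝ)^2 = ((gz:ℝ)*(hz:ℝ))*((gz:ℝ)*(hz:ℝ)) := by ring
      _ ≤ (36*(Pg*Pd))*(36*(Pg*Pd)) := h1
      _ = 1296*((Pg*Pd)*(Pg*Pd)) := by ring
      _ = 1296*Pl := by rw [f6]
  -- bounds for the four products
  have t1a : (0:ℝ) < (Gz:ℝ)*(Hz:ℝ) - S := by linarith
  have t1b : (Gz:ℝ)*(Hz:ℝ) - S ≤ 2*Pl := by linarith
  have t2 : (gz:ℝ)*(Hz:ℝ) ≤ 9*Pl := by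
    calc (gz:ℝ)*(Hz:ℝ) ≤ (3*Pg)*(3*B) := mul_le_mul hgr_hi hHB2 (by linarith) (by linarith)
      _ = 9*(Pg*B) := by ring
      _ = 9*Pl := by rw [f3]
  have t3 : (hz:ℝ)*(Gz:ℝ) ≤ 12*Pl := by
    calc (hz:ℝ)*(Gz:ℝ) ≤ (12*Pd)*A := mul_le_mul hhr_hi hGr_le (by linarith) (by linarith)
      _ = 12*(A*Pd) := by ring
      _ ≤ 12*Pl := by linarith
  have t4 : (gz:ℝ)*(hz:ℝ) ≤ 36*Pl := by
    calc (gz:ℝ)*(hz:ℝ) ≤ 36*(Pg*Pd) := hgh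
      _ ≤ 36*Pl := by linarith
  refine ⟨Gz, Hz, gz, hz, hG0, hH0, hg0, hh0, hGr_lo, hGr_le, hHB1, hHB2,
    ?_, ?_, ?_, ?_, ?_, ?_, ?_, ?_, ?_⟩
  · linarith
  · linarith
  · linarith
  · linarith
  · -- main error bound
    have key : x - ((Gz:ℝ) - (gz:ℝ)) * ((Gz:ℝ) + (gz:ℝ)) * (((Hz:ℝ) - (hz:ℝ)) * ((Hz:ℝ) + (hz:ℝ)))
        = -(N + (gz:ℝ)^2*(hz:ℝ)^2) := by
      rw [hNdef, hMdef, hLdef]; ring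
    rw [key, abs_neg, abs_of_nonneg (by positivity)]
    have : (gz:ℝ)^2*(hz:ℝ)^2 ≤ 1296*Pe := le_trans hghsq (by linarith)
    linarith
  · have e1 : ((Gz:ℝ) - gz) * ((Hz:ℝ) - hz) - S
        = ((Gz:ℝ)*(Hz:ℝ) - S) - (gz:ℝ)*(Hz:ℝ) - (hz:ℝ)*(Gz:ℝ) + (gz:ℝ)*(hz:ℝ) := by ring
    rw [abs_le, e1]; constructor <;> linarith
  · have e1 : ((Gz:ℝ) + gz) * ((Hz:ℝ) + hz) - S
        = ((Gz:ℝ)*(Hz:ℝ) - S) + (gz:ℝ)*(Hz:ℝ) + (hz:ℝ)*(Gz:ℝ) + (gz:ℝ)*(hz:ℝ) := by ring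
    rw [abs_le, e1]; constructor <;> linarith
  · have e1 : ((Gz:ℝ) - gz) * ((Hz:ℝ) + hz) - S
        = ((Gz:ℝ)*(Hz:ℝ) - S) - (gz:ℝ)*(Hz:ℝ) + (hz:ℝ)*(Gz:ℝ) - (gz:ℝ)*(hz:ℝ) := by ring
    rw [abs_le, e1]; constructor <;> linarith
  · have e1 : ((Gz:ℝ) + gz) * ((Hz:ℝ) - hz) - S
        = ((Gz:ℝ)*(Hz:ℝ) - S) + (gz:ℝ)*(Hz:ℝ) - (hz:ℝ)*(Gz:ℝ) - (gz:ℝ)*(hz:ℝ) := by ring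
    rw [abs_le, e1]; constructor <;> linarith
end

section
/- For every θ with 1/3 < θ ≤ 1/2, there exist constants C', C'' > 0 such that for all sufficiently large real x the interval [x − C''·x^{1/2 + ε(θ)}, x + C''·x^{1/2 + ε(θ)}] contains a (θ, C')-almost square of type 2, where ε(θ) > 0 can be taken arbitrarily small; in particular g(θ) ≤ 1/2 for θ > 1/3. -/
open Filter

namespace AS2Aux

/-- `j`-coordinate: the representative of `2m+1 mod K` in `[1,K]`. -/
def jmF (K m : ℤ) : ℤ := 2*m % K + 1
def tmF (K m : ℤ) : ℤ := 2*m / K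
def umF (K m : ℤ) : ℤ := (jmF K m * K + tmF K m - 1) / 2
def topF (K m : ℤ) : ℤ := m*(m+1) - umF K m * (umF K m + 1)

lemma mul_succ_nonneg (z : ℤ) : 0 ≤ z * (z+1) := by
  rcases le_or_gt 0 z with h | h
  · positivity
  · nlinarith

lemma divmod_unique {K a q r : ℤ} (h0 : 0 ≤ r) (h1 : r < K) (h : a = K*q + r) :
    a % K = r ∧ a / K = q := by
  have hK0 : (0:ℤ) < K := lt_of_le_of_lt h0 h1
  constructor
  · rw [h, add_comm, Int.add_mul_emod_self_left, Int.emod_eq_of_lt h0 h1]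
  · rw [h, add_comm, Int.add_mul_ediv_left r q hK0.ne', Int.ediv_eq_zero_of_lt h0 h1, zero_add]

lemma jm_bounds {K m : ℤ} (hK : 0 < K) : 1 ≤ jmF K m ∧ jmF K m ≤ K := by
  unfold jmF
  have h1 := Int.emod_nonneg (2*m) hK.ne'
  have h2 := Int.emod_lt_of_pos (2*m) hK
  omega

lemma um_eq {K m : ℤ} (hK : 0 < K) (hodd : K % 2 = 1) :
    2 * umF K m + 1 = jmF K m * K + tmF K m := by
  have hpar : ∃ w, jmF K m * K + tmF K m - 1 = 2*w := by
    obtain ⟨k, hk⟩ : ∃ k, K = 2*k+1 := ⟨K/2, by omega⟩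
    have hqr : K * tmF K m + (2*m % K) = 2*m := Int.mul_ediv_add_emod (2*m) K
    have hjm : jmF K m = (2*m % K) + 1 := rfl
    obtain ⟨q, hq⟩ : ∃ q, tmF K m = q := ⟨_, rfl⟩
    obtain ⟨r, hr⟩ : ∃ r, 2*m % K = r := ⟨_, rfl⟩
    rw [hq] at hqr
    rw [hr] at hqr hjm
    rw [hjm, hq]
    subst hk
    refine ⟨k*(r+1) + (m - k*q), ?_⟩
    ring_nf
    ring_nf at hqr
    linarith
  obtain ⟨w, hw⟩ := hpar
  unfold umF
  set E := jmF K m * K + tmF K m with hE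
  omega

set_option maxHeartbeats 2000000 in
lemma core (K Y M₁ M₂ : ℤ) (hK : 3 ≤ K) (hodd : K % 2 = 1) (hM₁pos : 1 ≤ M₁)
    (hM1 : topF K M₁ < Y) (hM2 : Y ≤ topF K M₂) (hM : M₁ ≤ M₂) :
    ∃ m₀ i₀ j₀ t u₀ n : ℤ,
      M₁ < m₀ ∧ m₀ ≤ M₂ ∧ 0 ≤ i₀ ∧ 1 ≤ j₀ ∧ j₀ ≤ 2 ∧
      K * t = 2*m₀ + 1 - j₀ ∧
      2*u₀ + 1 = j₀*K + t ∧
      n = (m₀+i₀)*(m₀+i₀+1) - (u₀+i₀*K)*(u₀+i₀*K+1) ∧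
      i₀*i₀*(K*K) ≤ 4*m₀ + K^4 + 2*(K*m₀) ∧
      Y ≤ n ∧ n ≤ Y + (K*K-1)*(j₀+2*i₀+1) := by
  have hK0 : (0:ℤ) < K := by omega
  have hKK9 : 9 ≤ K*K := by
    have h := mul_le_mul_of_nonneg_left hK (show (0:ℤ) ≤ K by omega)
    linarith
  have hlt : M₁ < M₂ := by
    rcases eq_or_lt_of_le hM with h | h
    · exfalso; rw [h] at hM1; linarith
    · exact h
  have hex : ∃ k : ℕ, Y ≤ topF K (M₁ + 1 + (k:ℤ)) :=
    ⟨(M₂ - M₁ - 1).toNat, by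
      rw [show M₁ + 1 + ((M₂ - M₁ - 1).toNat : ℤ) = M₂ by omega]; exact hM2⟩
  set m₀ := M₁ + 1 + (Nat.find hex : ℤ) with hm₀def
  have htop : Y ≤ topF K m₀ := Nat.find_spec hex
  have hm₀M₂ : m₀ ≤ M₂ := by
    have h := Nat.find_min' hex (m := (M₂ - M₁ - 1).toNat) (by
      rw [show M₁ + 1 + ((M₂ - M₁ - 1).toNat : ℤ) = M₂ by omega]; exact hM2)
    omega
  have hm₀2 : 2 ≤ m₀ := by omega
  have hprev : topF K (m₀ - 1) < Y := by
    rcases Nat.eq_zero_or_pos (Nat.find hex) with h0 | hpos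
    · rw [show m₀ - 1 = M₁ by omega]; exact hM1
    · have hmin := Nat.find_min hex (m := Nat.find hex - 1) (by omega)
      have h1 : m₀ - 1 = M₁ + 1 + ((Nat.find hex - 1 : ℕ) : ℤ) := by omega
      rw [h1]; exact lt_of_not_ge hmin
  have hM₁m₀ : M₁ < m₀ := by omega
  clear_value m₀
  clear hm₀def hex
  obtain ⟨qp, rp, hqr, h0r, hrK, hjp, htp⟩ :
      ∃ q r, K*q + r = 2*(m₀-1) ∧ 0 ≤ r ∧ r < K ∧ jmF K (m₀-1) = r + 1 ∧ tmF K (m₀-1) = q :=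
    ⟨2*(m₀-1)/K, 2*(m₀-1)%K, Int.mul_ediv_add_emod _ _, Int.emod_nonneg _ hK0.ne',
      Int.emod_lt_of_pos _ hK0, rfl, rfl⟩
  set up := umF K (m₀-1) with hupdef
  have hup : 2*up + 1 = (rp+1)*K + qp := by
    have h := um_eq (K := K) (m := m₀-1) hK0 hodd
    rw [hjp, htp] at h; exact h
  have hqp0 : 0 ≤ qp := by
    rcases le_or_gt 0 qp with h | h
    · exact h
    · exfalso
      have h2 := mul_le_mul_of_nonneg_left (show qp ≤ -1 by omega) (show (0:ℤ) ≤ K by omega)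
      linarith only [h2, hqr, h0r, hrK, hm₀2, hK]
  by_cases hwrap : rp + 2 < K
  · -- non-wrap case: contradiction with minimality
    exfalso
    obtain ⟨hm, hd⟩ := divmod_unique (K := K) (a := 2*m₀) (q := qp) (r := rp+2)
      (by omega) hwrap (by linarith)
    have hj : jmF K m₀ = rp + 3 := by unfold jmF; rw [hm]; ring
    have ht : tmF K m₀ = qp := by unfold tmF; rw [hd]
    have hu : 2 * umF K m₀ + 1 = (rp+3)*K + qp := by
      have h := um_eq (K := K) (m := m₀) hK0 hodd; rw [hj, ht] at h; exact h
    have hexp : (rp+3)*K = (rp+1)*K + 2*K := by ring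
    have huK : umF K m₀ = up + K := by linarith only [hu, hup, hexp]
    have htopm : topF K m₀ ≤ topF K (m₀-1) := by
      unfold topF
      rw [huK, ← hupdef]
      have key : 2*K*up + K*K + K - 2*m₀ = (rp+2)*(K*K-1) := by
        linear_combination K*hup + hqr
      have hnn : 0 ≤ (rp+2)*(K*K-1) :=
        mul_nonneg (by omega) (by linarith only [hKK9])
      linarith only [key, hnn]
    linarith only [htop, hprev, htopm]
  · -- wrap case
    have hrw : K ≤ rp + 2 := by omega
    obtain ⟨hm, hd⟩ := divmod_unique (K := K) (a := 2*m₀) (q := qp + 1) (r := rp + 2 - K)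
      (by omega) (by omega) (by linear_combination -hqr)
    set j₀ := rp + 3 - K with hj₀
    have hj : jmF K m₀ = j₀ := by unfold jmF; rw [hm]; omega
    set t := qp + 1 with htdef
    have ht : tmF K m₀ = t := by unfold tmF; rw [hd]
    set u₀ := umF K m₀ with hu₀def
    have hu₀ : 2*u₀ + 1 = j₀*K + t := by
      have h := um_eq (K := K) (m := m₀) hK0 hodd; rw [hj, ht] at h; exact h
    have hj₀1 : 1 ≤ j₀ := by omega
    have hj₀2 : j₀ ≤ 2 := by omega
    have hKt : K * t = 2*m₀ + 1 - j₀ := by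
      rw [htdef, hj₀]; linear_combination hqr
    set T := topF K m₀ - Y with hTdef
    have hT0 : 0 ≤ T := by rw [hTdef]; linarith only [htop]
    -- step bound
    have hw2 : 2*(up - u₀) = K*K - 2*K - 1 := by
      linear_combination hup - hu₀ - K*hj₀ - htdef
    have hKK2 : 2 ≤ K*K - 2*K - 1 := by
      have h := mul_nonneg (show (0:ℤ) ≤ K-3 by omega) (show (0:ℤ) ≤ K+1 by omega)
      linarith only [h]
    have hupu₀ : u₀ + 1 ≤ up := by linarith only [hw2, hKK2]
    have hj₀K : K ≤ j₀*K := by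
      have h := mul_le_mul_of_nonneg_right hj₀1 (show (0:ℤ) ≤ K by omega)
      linarith only [h]
    have hu₀1 : 0 ≤ u₀ := by linarith only [hu₀, hj₀K, hK, hqp0, htdef]
    have hSnn : 0 ≤ up + u₀ + 1 := by linarith only [hu₀1, hupu₀]
    have hdiff : topF K m₀ - topF K (m₀-1) = 2*m₀ + (up - u₀)*(up + u₀ + 1) := by
      unfold topF
      rw [← hu₀def, ← hupdef]; ring
    have hKqp : K*qp ≤ 2*m₀ := by linarith only [hqr, h0r]
    have hbound : 2*((up-u₀)*(up+u₀+1)) ≤ K^4 + 2*(K*m₀) := by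
      have h1 : 2*((up-u₀)*(up+u₀+1)) = (K*K-2*K-1)*(up+u₀+1) := by
        rw [← hw2]; ring
      have h2 := mul_nonneg hSnn (show (0:ℤ) ≤ 2*K+1 by omega)
      have h3 : up + u₀ + 1 ≤ (rp+1)*K + qp := by linarith only [hup, hupu₀]
      have h4 : (K*K)*(up+u₀+1) ≤ (K*K)*((rp+1)*K + qp) :=
        mul_le_mul_of_nonneg_left h3 (by positivity)
      have h5 : (rp+1)*K ≤ K*K := mul_le_mul_of_nonneg_right (by omega) (by omega)
      have h6 := mul_le_mul_of_nonneg_left h5 (show (0:ℤ) ≤ K*K by positivity)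
      have h7 := mul_le_mul_of_nonneg_left hKqp (show (0:ℤ) ≤ K by omega)
      linarith only [h1, h2, h4, h6, h7]
    have hTB : 2*T ≤ 4*m₀ + K^4 + 2*(K*m₀) := by
      have h8 : T ≤ topF K m₀ - topF K (m₀-1) := by
        rw [hTdef]; linarith only [hprev]
      linarith only [h8, hdiff, hbound]
    -- choose i₀
    have hexi : ∃ i : ℕ, T < (K*K-1)*((i:ℤ)+1)*(j₀+(i:ℤ)+1) := by
      refine ⟨T.toNat, ?_⟩
      have hA : 1 ≤ K*K-1 := by linarith only [hKK9]
      have hB : T < (T.toNat:ℤ)+1 := by omega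
      have hC : 1 ≤ j₀ + (T.toNat:ℤ) + 1 := by omega
      have e1 : ((T.toNat:ℤ)+1) ≤ (K*K-1)*((T.toNat:ℤ)+1) :=
        le_mul_of_one_le_left (by omega) hA
      have e2 : (K*K-1)*((T.toNat:ℤ)+1) ≤ (K*K-1)*((T.toNat:ℤ)+1)*(j₀+(T.toNat:ℤ)+1) :=
        le_mul_of_one_le_right (by linarith only [e1, hB, hT0]) hC
      linarith only [hB, e1, e2]
    set i₀ : ℤ := ((Nat.find hexi : ℕ) : ℤ) with hi₀def
    have hi₀0 : 0 ≤ i₀ := Int.natCast_nonneg _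
    have hi₀spec : T < (K*K-1)*(i₀+1)*(j₀+i₀+1) := Nat.find_spec hexi
    have hD₀ : (K*K-1)*i₀*(j₀+i₀) ≤ T := by
      rcases Nat.eq_zero_or_pos (Nat.find hexi) with h0 | hpos
      · have hz : i₀ = 0 := by rw [hi₀def, h0]; rfl
        rw [hz]; simpa using hT0
      · have hmin := Nat.find_min hexi (m := Nat.find hexi - 1) (by omega)
        push_neg at hmin
        have hc : ((Nat.find hexi - 1 : ℕ) : ℤ) = i₀ - 1 := by omega
        rw [hc] at hmin
        calc (K*K-1)*i₀*(j₀+i₀) = (K*K-1)*((i₀-1)+1)*(j₀+(i₀-1)+1) := by ring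
        _ ≤ T := hmin
    clear_value i₀
    clear hi₀def hexi
    refine ⟨m₀, i₀, j₀, t, u₀, topF K m₀ - (K*K-1)*i₀*(j₀+i₀),
      hM₁m₀, hm₀M₂, hi₀0, hj₀1, hj₀2, hKt, hu₀, ?_, ?_, by linarith only [hD₀, hTdef, hT0], ?_⟩
    · -- n formula
      have htopf : topF K m₀ = m₀*(m₀+1) - u₀*(u₀+1) := by
        unfold topF; rw [← hu₀def]
      rw [htopf]
      linear_combination (i₀*K) * hu₀ + i₀ * hKt
    · -- i₀ bound
      have h9 : i₀*i₀ ≤ i₀*(j₀+i₀) :=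
        mul_le_mul_of_nonneg_left (by omega) hi₀0
      have h9' : (K*K-1)*(i₀*i₀) ≤ (K*K-1)*(i₀*(j₀+i₀)) :=
        mul_le_mul_of_nonneg_left h9 (by linarith only [hKK9])
      have h10 := mul_nonneg (mul_nonneg hi₀0 hi₀0) (show (0:ℤ) ≤ K*K-2 by linarith only [hKK9])
      linarith only [h9', h10, hD₀, hTB]
    · -- upper bound on n
      have hexpand : (K*K-1)*(i₀+1)*(j₀+i₀+1)
          = (K*K-1)*i₀*(j₀+i₀) + (K*K-1)*(j₀+2*i₀+1) := by ring
      linarith only [hexpand, hi₀spec, hTdef]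

lemma ev_small {a b : ℝ} (hab : a < b) (c : ℝ) (hc : 0 < c) :
    ∀ᶠ x : ℝ in atTop, x ^ a ≤ c * x ^ b := by
  have h := (tendsto_rpow_atTop (show (0:ℝ) < b - a by linarith)).eventually_ge_atTop (1/c)
  filter_upwards [h, eventually_ge_atTop (1:ℝ)] with x hx hx1
  have hx0 : (0:ℝ) < x := by linarith
  have hb : x ^ b = x ^ (b-a) * x ^ a := by
    rw [← Real.rpow_add hx0]; ring_nf
  have hxa : (0:ℝ) < x ^ a := Real.rpow_pos_of_pos hx0 a
  have h1 : 1/c * x ^ a ≤ x ^ (b-a) * x ^ a := mul_le_mul_of_nonneg_right hx hxa.le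
  rw [hb]
  calc x ^ a = c * (1/c * x ^ a) := by field_simp
  _ ≤ c * (x ^ (b-a) * x ^ a) := mul_le_mul_of_nonneg_left h1 hc.le

lemma sq_cancel_12 {a X : ℝ} (ha : 0 ≤ a) (hX : 0 ≤ X) (h : a*a ≤ 131*(X*X)) :
    a ≤ 12*X := by nlinarith

lemma sqrt_le_of_sq {A B : ℝ} (hA : 0 ≤ A) (hB : 0 ≤ B) (h : A ≤ B^2) :
    A ^ ((1:ℝ)/2) ≤ B := by
  have h1 := Real.rpow_le_rpow hA h (by norm_num : (0:ℝ) ≤ 1/2)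
  have h2 : (B^2) ^ ((1:ℝ)/2) = B := by
    rw [← Real.rpow_natCast B 2, ← Real.rpow_mul hB]
    norm_num
  rwa [h2] at h1

lemma le_sqrt_of_sq {A B : ℝ} (hB : 0 ≤ B) (h : B^2 ≤ A) : B ≤ A ^ ((1:ℝ)/2) := by
  have h1 := Real.rpow_le_rpow (sq_nonneg B) h (by norm_num : (0:ℝ) ≤ 1/2)
  have h2 : (B^2) ^ ((1:ℝ)/2) = B := by
    rw [← Real.rpow_natCast B 2, ← Real.rpow_mul hB]
    norm_num
  rwa [h2] at h1

end AS2Aux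

set_option maxHeartbeats 4000000 in
theorem g_le_half_beyond_third (θ : ℝ) (hθ1 : 1/3 < θ) (hθ2 : θ ≤ 1/2)
    (ε : ℝ) (hε : ε > 0) :
    ∃ C' C'' : ℝ, C' > 0 ∧ C'' > 0 ∧ ∃ x0 : ℝ, ∀ x : ℝ, x ≥ x0 →
      ∃ n : ℤ, |(n : ℝ) - x| ≤ C'' * x ^ ((1:ℝ)/2 + ε) ∧ AlmostSquareType2 n θ C' := by
  classical
  have hθ0 : (0:ℝ) < θ := by linarith
  refine ⟨2000, 1000, by norm_num, by norm_num, ?_⟩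
  rw [← eventually_atTop]
  filter_upwards [eventually_ge_atTop (16:ℝ),
    AS2Aux.ev_small (show 2-4*θ < 2*θ by linarith) (1/100) (by norm_num),
    AS2Aux.ev_small (show (0:ℝ) < 2*θ by linarith) (1/100) (by norm_num),
    AS2Aux.ev_small (show 1-3*θ/2 < (1:ℝ)/2 by linarith) (1/1000) (by norm_num),
    AS2Aux.ev_small (show (1:ℝ)/6 < (1:ℝ)/2 by norm_num) (1/1000) (by norm_num),
    AS2Aux.ev_small (show (1-θ)/2 < (1:ℝ)/2 by linarith) (1/1000) (by norm_num),
    AS2Aux.ev_small (show (1-θ)/2 < θ by linarith) (1/100) (by norm_num)]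
    with x hx16 hN1 hN2 hN3 hN5 hN7 hN8
  have hx0 : (0:ℝ) < x := by linarith
  have hx1 : (1:ℝ) ≤ x := by linarith
  have hmono : ∀ {a b : ℝ}, a ≤ b → x ^ a ≤ x ^ b :=
    fun h => Real.rpow_le_rpow_of_exponent_le hx1 h
  have hmul : ∀ a b : ℝ, x ^ a * x ^ b = x ^ (a+b) := fun a b => (Real.rpow_add hx0 a b).symm
  have hrp : ∀ a : ℝ, 0 < x ^ a := fun a => Real.rpow_pos_of_pos hx0 a
  have hsq16 : (4:ℝ) ≤ x ^ ((1:ℝ)/2) := by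
    have h : (16:ℝ) ^ ((1:ℝ)/2) ≤ x ^ ((1:ℝ)/2) :=
      Real.rpow_le_rpow (by norm_num) hx16 (by norm_num)
    have h16 : (16:ℝ) ^ ((1:ℝ)/2) = 4 := by
      rw [show (16:ℝ) = 4^(2:ℕ) by norm_num, ← Real.rpow_natCast 4 2,
        ← Real.rpow_mul (by norm_num : (0:ℝ) ≤ 4)]
      norm_num
    linarith [h16.le, h16.ge]
  have hAA : x^((1:ℝ)/2) * x^((1:ℝ)/2) = x := by
    rw [hmul]; norm_num
  -- K
  set p : ℝ := 1/2 - θ with hpdef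
  have hp0 : 0 ≤ p := by rw [hpdef]; linarith
  have hxp1 : 1 ≤ x ^ p := Real.one_le_rpow hx1 hp0
  set K : ℤ := 2*⌊x ^ p⌋ + 1 with hKdef
  have hKfl : 1 ≤ ⌊x ^ p⌋ := Int.le_floor.mpr (by exact_mod_cast hxp1)
  have hK3 : 3 ≤ K := by omega
  have hKodd : K % 2 = 1 := by omega
  have hKr0 : (0:ℝ) < (K:ℝ) := by exact_mod_cast (show (0:ℤ) < K by omega)
  have hKr3 : (3:ℝ) ≤ (K:ℝ) := by exact_mod_cast hK3
  have hKle : (K:ℝ) ≤ 3 * x ^ p := by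
    rw [hKdef]
    push_cast
    have h := Int.floor_le (x ^ p)
    linarith
  have hKge : x ^ p ≤ (K:ℝ) := by
    rw [hKdef]
    push_cast
    have h := Int.lt_floor_add_one (x ^ p)
    linarith
  have hp2 : x^p*x^p = x^(1-2*θ) := by
    rw [hmul, show p+p = 1-2*θ by rw [hpdef]; ring]
  have hKsq : (K:ℝ)*(K:ℝ) ≤ 9*x^(1-2*θ) := by
    have h := mul_le_mul hKle hKle hKr0.le (by positivity : (0:ℝ) ≤ 3*x^p)
    calc (K:ℝ)*(K:ℝ) ≤ 3*x^p*(3*x^p) := h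
    _ = 9*(x^p*x^p) := by ring
    _ = 9*x^(1-2*θ) := by rw [hp2]
  have hq2 : x^(1-2*θ)*x^(1-2*θ) = x^(2-4*θ) := by
    rw [hmul, show (1-2*θ)+(1-2*θ) = 2-4*θ by ring]
  have hKKnn : (0:ℝ) ≤ (K:ℝ)*(K:ℝ) := by positivity
  have hK4 : ((K:ℝ)*(K:ℝ))*((K:ℝ)*(K:ℝ)) ≤ 81*x^(2-4*θ) := by
    have h := mul_le_mul hKsq hKsq hKKnn (by positivity)
    calc ((K:ℝ)*(K:ℝ))*((K:ℝ)*(K:ℝ)) ≤ 9*x^(1-2*θ)*(9*x^(1-2*θ)) := h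
    _ = 81*(x^(1-2*θ)*x^(1-2*θ)) := by ring
    _ = 81*x^(2-4*θ) := by rw [hq2]
  -- Y, M₁, M₂
  set Y : ℤ := ⌈x⌉ with hYdef
  have hY1 : x ≤ (Y:ℝ) := Int.le_ceil x
  have hY2 : (Y:ℝ) ≤ x + 1 := le_of_lt (Int.ceil_lt_add_one x)
  set M₁ : ℤ := ⌊x ^ ((1:ℝ)/2)⌋ - 1 with hM₁def
  have hM₁a : (M₁:ℝ) ≤ x ^ ((1:ℝ)/2) - 1 := by
    rw [hM₁def]; push_cast; linarith [Int.floor_le (x ^ ((1:ℝ)/2))]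
  have hM₁b : x ^ ((1:ℝ)/2) - 2 ≤ (M₁:ℝ) := by
    rw [hM₁def]; push_cast; linarith [Int.lt_floor_add_one (x ^ ((1:ℝ)/2))]
  have hM₁pos : 1 ≤ M₁ := by
    have h : (1:ℝ) ≤ (M₁:ℝ) := by linarith
    exact_mod_cast h
  set S : ℝ := (x + 9*x^(2*θ)) ^ ((1:ℝ)/2) with hSdef
  have hIx : (0:ℝ) < x + 9*x^(2*θ) := by
    linarith only [hx0, hrp (2*θ)]
  have hS0 : (0:ℝ) ≤ S := Real.rpow_nonneg hIx.le _
  have hSsq : S * S = x + 9*x^(2*θ) := by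
    rw [hSdef, ← Real.rpow_add hIx]
    norm_num
  have hSx : x ^ ((1:ℝ)/2) ≤ S := by
    rw [hSdef]
    exact Real.rpow_le_rpow hx0.le (by linarith only [hrp (2*θ)]) (by norm_num)
  have hθθ : x^θ * x^θ = x^(2*θ) := by
    rw [hmul, show θ+θ = 2*θ by ring]
  have hSub : S ≤ x ^ ((1:ℝ)/2) + 3*x^θ := by
    have h1 : x + 9*x^(2*θ) ≤ (x^((1:ℝ)/2) + 3*x^θ)^2 := by
      linarith only [hAA, hθθ, mul_nonneg (hrp ((1:ℝ)/2)).le (hrp θ).le]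
    have h2 := AS2Aux.sqrt_le_of_sq hIx.le (by positivity) h1
    rw [← hSdef] at h2
    exact h2
  set M₂ : ℤ := ⌈S⌉ with hM₂def
  have hM₂a : S ≤ (M₂:ℝ) := Int.le_ceil S
  have hM₂b : (M₂:ℝ) ≤ S + 1 := le_of_lt (Int.ceil_lt_add_one S)
  have hM₂0 : (0:ℝ) ≤ (M₂:ℝ) := le_trans hS0 hM₂a
  have hM₂up : (M₂:ℝ) ≤ 5 * x ^ ((1:ℝ)/2) := by
    have h1 : x^θ ≤ x^((1:ℝ)/2) := hmono hθ2
    linarith [hSub, hsq16]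
  have hM₁M₂ : M₁ ≤ M₂ := by
    have h : (M₁:ℝ) ≤ (M₂:ℝ) := by linarith [hSx]
    exact_mod_cast h
  -- topF at M₁
  have htopM₁ : AS2Aux.topF K M₁ < Y := by
    have h1 : AS2Aux.topF K M₁ ≤ M₁*(M₁+1) := by
      have h := AS2Aux.mul_succ_nonneg (AS2Aux.umF K M₁)
      unfold AS2Aux.topF
      linarith
    have hM₁0 : (0:ℝ) ≤ (M₁:ℝ) := by linarith
    have h2 : (M₁:ℝ)*((M₁:ℝ)+1) < x := by
      have e1 : (M₁:ℝ)*((M₁:ℝ)+1) ≤ (x^((1:ℝ)/2)-1)*(x^((1:ℝ)/2)) :=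
        mul_le_mul hM₁a (by linarith) (by linarith) (by linarith [hsq16])
      linarith only [e1, hAA, hsq16]
    have h3 : ((AS2Aux.topF K M₁ : ℤ):ℝ) < (Y:ℝ) := by
      calc ((AS2Aux.topF K M₁ : ℤ):ℝ) ≤ ((M₁*(M₁+1):ℤ):ℝ) := by exact_mod_cast h1
      _ = (M₁:ℝ)*((M₁:ℝ)+1) := by push_cast; ring
      _ < x := h2
      _ ≤ (Y:ℝ) := hY1
    exact_mod_cast h3
  -- topF at M₂
  have hK0' : (0:ℤ) < K := by omega
  have htopM₂ : Y ≤ AS2Aux.topF K M₂ := by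
    obtain ⟨hj₂1, hj₂K⟩ := AS2Aux.jm_bounds (K := K) (m := M₂) hK0'
    have hu₂ : 2*(AS2Aux.umF K M₂) + 1 = (AS2Aux.jmF K M₂)*K + (AS2Aux.tmF K M₂) :=
      AS2Aux.um_eq hK0' hKodd
    set j₂ := AS2Aux.jmF K M₂
    set t₂ := AS2Aux.tmF K M₂
    set u₂ := AS2Aux.umF K M₂
    have hM₂z0 : (0:ℤ) ≤ M₂ := by exact_mod_cast hM₂0
    have ht₂0 : (0:ℤ) ≤ t₂ := Int.ediv_nonneg (by omega) (by omega)
    have ht₂K : K * t₂ ≤ 2*M₂ := by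
      have h := Int.mul_ediv_add_emod (2*M₂) K
      have h2 := Int.emod_nonneg (2*M₂) hK0'.ne'
      show K * ((2*M₂)/K) ≤ 2*M₂
      linarith
    have hj₂Kr : (j₂:ℝ)*(K:ℝ) ≤ (K:ℝ)*(K:ℝ) := by
      have h : (j₂:ℝ) ≤ (K:ℝ) := by exact_mod_cast hj₂K
      exact mul_le_mul_of_nonneg_right h hKr0.le
    have ht₂r : (t₂:ℝ)*(K:ℝ) ≤ 2*(M₂:ℝ) := by
      have h : ((K*t₂:ℤ):ℝ) ≤ ((2*M₂:ℤ):ℝ) := by exact_mod_cast ht₂K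
      push_cast at h; linarith
    have ht₂r0 : (0:ℝ) ≤ (t₂:ℝ) := by exact_mod_cast ht₂0
    have ht₂sq : ((t₂:ℝ)*(t₂:ℝ))*((K:ℝ)*(K:ℝ)) ≤ 4*((M₂:ℝ)*(M₂:ℝ)) := by
      have e := mul_le_mul ht₂r ht₂r (mul_nonneg ht₂r0 hKr0.le) (by linarith [hM₂0])
      linarith only [e]
    have hM₂sq : (M₂:ℝ)*(M₂:ℝ) ≤ 2*(x + 9*x^(2*θ)) + 2 := by
      have e := mul_le_mul hM₂b hM₂b hM₂0 (by linarith [hS0])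
      linarith only [e, hSsq, sq_nonneg (S-1)]
    have hxid : x^(2*θ) * x^(1-2*θ) = x := by
      rw [hmul, show 2*θ + (1-2*θ) = 1 by ring, Real.rpow_one]
    have hK2a : x^(1-2*θ) ≤ (K:ℝ)*(K:ℝ) := by
      have h1 : x^p * x^p ≤ (K:ℝ)*(K:ℝ) :=
        mul_le_mul hKge hKge (hrp p).le hKr0.le
      rwa [hp2] at h1
    have hK2b : (9:ℝ) ≤ (K:ℝ)*(K:ℝ) := by
      have e := mul_le_mul hKr3 hKr3 (by norm_num) hKr0.le
      linarith only [e]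
    have ht₂sq' : (t₂:ℝ)*(t₂:ℝ) ≤ 16*x^(2*θ) + 1 := by
      have h1 : ((t₂:ℝ)*(t₂:ℝ))*((K:ℝ)*(K:ℝ)) ≤ 8*x + 72*x^(2*θ) + 8 := by
        linarith [ht₂sq, hM₂sq]
      have e1 : 8*x^(2*θ)*x^(1-2*θ) ≤ 8*x^(2*θ)*((K:ℝ)*(K:ℝ)) :=
        mul_le_mul_of_nonneg_left hK2a (by positivity)
      have e2 : 8*x^(2*θ)*9 ≤ 8*x^(2*θ)*((K:ℝ)*(K:ℝ)) :=
        mul_le_mul_of_nonneg_left hK2b (by positivity)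
      have e3 : 8*x^(2*θ)*x^(1-2*θ) = 8*x := by rw [mul_assoc, hxid]
      have h3 : ((t₂:ℝ)*(t₂:ℝ))*((K:ℝ)*(K:ℝ)) ≤ (16*x^(2*θ)+1)*((K:ℝ)*(K:ℝ)) := by
        linarith only [e1, e2, e3, h1, hK2b]
      have hKK0 : (0:ℝ) < (K:ℝ)*(K:ℝ) := by positivity
      exact le_of_mul_le_mul_right h3 hKK0
    have hu₂rr : ((2*u₂+1:ℤ):ℝ) = 2*(u₂:ℝ)+1 := by push_cast; ring
    have hu₂r0 : (0:ℝ) ≤ 2*(u₂:ℝ)+1 := by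
      have h5 := mul_le_mul_of_nonneg_right hj₂1 (show (0:ℤ) ≤ K by omega)
      have h6 : (0:ℤ) ≤ 2*u₂+1 := by linarith [hu₂, ht₂0, h5, hK3]
      exact_mod_cast h6
    have hu₂r1 : 2*(u₂:ℝ)+1 ≤ (K:ℝ)*(K:ℝ) + (t₂:ℝ) := by
      have h : 2*(u₂:ℝ)+1 = (j₂:ℝ)*(K:ℝ) + (t₂:ℝ) := by exact_mod_cast hu₂
      linarith [hj₂Kr, h]
    have hu₂sq : (2*(u₂:ℝ)+1)*(2*(u₂:ℝ)+1)
        ≤ 2*(((K:ℝ)*(K:ℝ))*((K:ℝ)*(K:ℝ))) + 2*((t₂:ℝ)*(t₂:ℝ)) := by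
      have e := mul_le_mul hu₂r1 hu₂r1 hu₂r0 (by positivity)
      linarith only [e, sq_nonneg ((K:ℝ)*(K:ℝ) - (t₂:ℝ))]
    have hu₂u₂ : (u₂:ℝ)*((u₂:ℝ)+1) ≤ 9*x^(2*θ) - 1 := by
      have h2 : (2*(u₂:ℝ)+1)*(2*(u₂:ℝ)+1) ≤ 162*x^(2-4*θ) + 32*x^(2*θ) + 2 := by
        linarith [hu₂sq, hK4, ht₂sq']
      have h3 : x^(2-4*θ) ≤ (1/100)*x^(2*θ) := hN1
      have h4 : (1:ℝ) ≤ (1/100)*x^(2*θ) := by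
        have := hN2; rwa [Real.rpow_zero] at this
      linarith only [h2, h3, h4]
    have htopr : ((AS2Aux.topF K M₂:ℤ):ℝ) = (M₂:ℝ)*((M₂:ℝ)+1) - (u₂:ℝ)*((u₂:ℝ)+1) := by
      show ((M₂*(M₂+1) - u₂*(u₂+1) : ℤ):ℝ) = _
      push_cast; ring
    have hM2sq' : x + 9*x^(2*θ) ≤ (M₂:ℝ)*(M₂:ℝ) := by
      have e := mul_le_mul hM₂a hM₂a hS0 hM₂0
      linarith only [e, hSsq]
    have hfin : (Y:ℝ) ≤ ((AS2Aux.topF K M₂:ℤ):ℝ) := by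
      rw [htopr]
      linarith only [hu₂u₂, hM₂0, hY2, hM2sq']
    exact_mod_cast hfin
  -- apply core
  obtain ⟨m₀, i₀, j₀, t, u₀, n, hMm₀, hm₀M₂, hi₀0, hj₀1, hj₀2, hKt, hu₀, hnform, hi₀B, hYn, hnY⟩ :=
    AS2Aux.core K Y M₁ M₂ hK3 hKodd hM₁pos htopM₁ htopM₂ hM₁M₂
  set m : ℤ := m₀ + i₀ with hmdef
  set u : ℤ := u₀ + i₀*K with hudef
  set j : ℤ := j₀ + 2*i₀ with hjdef
  have hj1 : 1 ≤ j := by omega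
  have h2u : 2*u + 1 = j*K + t := by
    rw [hudef, hjdef]; linear_combination hu₀
  have hmj : 2*m + 1 - j = K*t := by
    rw [hmdef, hjdef]; linear_combination -hKt
  set u' : ℤ := u - j*K with hu'def
  have h2u' : 2*u' + 1 = t - j*K := by
    rw [hu'def]; linarith [h2u]
  -- real bounds on m₀, i₀K, jK, t, u
  have hm₀r_up : (m₀:ℝ) ≤ 5*x^((1:ℝ)/2) := by
    have h : (m₀:ℝ) ≤ (M₂:ℝ) := by exact_mod_cast hm₀M₂
    linarith [hM₂up]
  have hm₀r_lo : x^((1:ℝ)/2) - 1 ≤ (m₀:ℝ) := by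
    have h : (M₁:ℝ) + 1 ≤ (m₀:ℝ) := by exact_mod_cast hMm₀
    linarith [hM₁b]
  have hi₀r0 : (0:ℝ) ≤ (i₀:ℝ) := by exact_mod_cast hi₀0
  have hhalf : x^((1-θ)/2) * x^((1-θ)/2) = x^(1-θ) := by
    rw [hmul, show (1-θ)/2 + (1-θ)/2 = 1-θ by ring]
  have hiKsq : ((i₀:ℝ)*(K:ℝ))*((i₀:ℝ)*(K:ℝ)) ≤ 131*x^(1-θ) := by
    have h1 : ((i₀*i₀*(K*K):ℤ):ℝ) ≤ ((4*m₀ + K^4 + 2*(K*m₀):ℤ):ℝ) := by exact_mod_cast hi₀B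
    push_cast at h1
    have h3 : (K:ℝ)*(m₀:ℝ) ≤ 3*x^p*(5*x^((1:ℝ)/2)) :=
      mul_le_mul hKle hm₀r_up (by linarith [hsq16]) (by positivity)
    have h4 : x^p * x^((1:ℝ)/2) = x^(1-θ) := by
      rw [hmul, show p + (1:ℝ)/2 = 1-θ by rw [hpdef]; ring]
    have h5 : x^((1:ℝ)/2) ≤ x^(1-θ) := hmono (by linarith)
    have h6 : x^(2-4*θ) ≤ x^(1-θ) := hmono (by linarith)
    linarith only [h1, hK4, h3, h4, h5, h6, hm₀r_up]
  have hiK : (i₀:ℝ)*(K:ℝ) ≤ 12*x^((1-θ)/2) := by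
    apply AS2Aux.sq_cancel_12 (mul_nonneg hi₀r0 hKr0.le) (hrp ((1-θ)/2)).le
    rw [show 131*(x^((1-θ)/2)*x^((1-θ)/2)) = 131*x^(1-θ) by rw [hhalf]]
    exact hiKsq
  have hjKr : (j:ℝ)*(K:ℝ) ≤ 30*x^((1-θ)/2) := by
    have h1 : (j:ℝ)*(K:ℝ) = (j₀:ℝ)*(K:ℝ) + 2*((i₀:ℝ)*(K:ℝ)) := by
      rw [hjdef]; push_cast; ring
    have h2 : (j₀:ℝ) ≤ 2 := by exact_mod_cast hj₀2
    have h3 : (j₀:ℝ)*(K:ℝ) ≤ 2*(K:ℝ) := mul_le_mul_of_nonneg_right h2 hKr0.le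
    have h5 : x^p ≤ x^((1-θ)/2) := hmono (by rw [hpdef]; linarith)
    linarith [hiK, hKle]
  have hjK0 : (0:ℝ) ≤ (j:ℝ)*(K:ℝ) :=
    mul_nonneg (by exact_mod_cast (by omega : (0:ℤ) ≤ j)) hKr0.le
  have hKtr : (K:ℝ)*(t:ℝ) = 2*(m₀:ℝ)+1-(j₀:ℝ) := by
    exact_mod_cast hKt
  have hj₀r1 : (1:ℝ) ≤ (j₀:ℝ) := by exact_mod_cast hj₀1
  have hj₀r2 : (j₀:ℝ) ≤ 2 := by exact_mod_cast hj₀2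
  have hKtlo : 2*x^((1:ℝ)/2) - 3 ≤ (K:ℝ)*(t:ℝ) := by
    rw [hKtr]; linarith [hm₀r_lo]
  have ht0 : (0:ℝ) < (t:ℝ) := by
    by_contra h
    push_neg at h
    have h2 : (K:ℝ)*(t:ℝ) ≤ 0 := mul_nonpos_of_nonneg_of_nonpos hKr0.le h
    linarith [hsq16]
  have hKtup : (K:ℝ)*(t:ℝ) ≤ 2*(m₀:ℝ) := by rw [hKtr]; linarith
  have htup : (t:ℝ) ≤ 10*x^θ := by
    have h1 : (t:ℝ)*(x^p) ≤ (t:ℝ)*(K:ℝ) := mul_le_mul_of_nonneg_left hKge ht0.le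
    have h2 : x^θ * x^p = x^((1:ℝ)/2) := by
      rw [hmul, show θ+p = (1:ℝ)/2 by rw [hpdef]; ring]
    have h3 : (t:ℝ)*(x^p) ≤ 10*x^θ*(x^p) := by
      have : (t:ℝ)*(K:ℝ) ≤ 10*(x^θ*x^p) := by rw [h2]; linarith [hKtup, hm₀r_up]
      calc (t:ℝ)*(x^p) ≤ (t:ℝ)*(K:ℝ) := h1
      _ ≤ 10*(x^θ*x^p) := this
      _ = 10*x^θ*(x^p) := by ring
    exact le_of_mul_le_mul_right h3 (hrp p)
  have hjKt : j*K + 1 ≤ t := by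
    have h1 : (K:ℝ)*((j:ℝ)*(K:ℝ)) ≤ 3*x^p*(30*x^((1-θ)/2)) :=
      mul_le_mul hKle hjKr hjK0 (by positivity)
    have h2 : x^p * x^((1-θ)/2) = x^(1-3*θ/2) := by
      rw [hmul, show p + (1-θ)/2 = 1-3*θ/2 by rw [hpdef]; ring]
    have h3 : (K:ℝ)*((j:ℝ)*(K:ℝ)) ≤ 90*((1/1000)*x^((1:ℝ)/2)) := by
      have : 3*x^p*(30*x^((1-θ)/2)) = 90*(x^p*x^((1-θ)/2)) := by ring
      rw [this, h2] at h1
      linarith [hN3]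
    have h4 : (K:ℝ) ≤ 3*((1/1000)*x^((1:ℝ)/2)) := by
      have h5 : x^p ≤ x^((1:ℝ)/6) := hmono (by rw [hpdef]; linarith)
      linarith [hN5, hKle]
    have h6 : (K:ℝ)*((j:ℝ)*(K:ℝ)+1) ≤ (K:ℝ)*(t:ℝ) := by
      have : (K:ℝ)*((j:ℝ)*(K:ℝ)+1) = (K:ℝ)*((j:ℝ)*(K:ℝ)) + (K:ℝ) := by ring
      rw [this]
      linarith [hKtlo, hsq16]
    have h7 : (j:ℝ)*(K:ℝ)+1 ≤ (t:ℝ) := le_of_mul_le_mul_left h6 hKr0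
    have h8 : ((j*K+1:ℤ):ℝ) ≤ ((t:ℤ):ℝ) := by push_cast; linarith
    exact_mod_cast h8
  have hu'0 : 0 ≤ u' := by linarith [h2u', hjKt]
  have h2ur : 2*(u:ℝ)+1 = (j:ℝ)*(K:ℝ) + (t:ℝ) := by
    exact_mod_cast h2u
  have hur_up : (u:ℝ) ≤ 6*x^θ := by
    have h5 : x^((1-θ)/2) ≤ (1/100)*x^θ := hN8
    linarith [h2ur, hjKr, htup, hrp θ]
  have ht1 : (1:ℤ) ≤ t := by
    have h : (0:ℤ) < t := by exact_mod_cast ht0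
    omega
  have hjKz : (0:ℤ) ≤ j*K := mul_nonneg (by omega) (by omega)
  have hu0 : (0:ℤ) ≤ u := by linarith [h2u, ht1, hjKz]
  have hur0 : (0:ℝ) ≤ (u:ℝ) := by exact_mod_cast hu0
  have hmr : (m:ℝ) = (m₀:ℝ) + (i₀:ℝ) := by rw [hmdef]; push_cast; ring
  have hmlo : x^((1:ℝ)/2) - 1 ≤ (m:ℝ) := by rw [hmr]; linarith [hm₀r_lo, hi₀r0]
  have hmu2 : (2:ℝ) ≤ (m:ℝ) - (u:ℝ) := by
    have h1 : 3*(t:ℝ) ≤ (K:ℝ)*(t:ℝ) := mul_le_mul_of_nonneg_right hKr3 ht0.le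
    have h2 : (j:ℝ)*(K:ℝ) ≤ 30*((1/1000)*x^((1:ℝ)/2)) := by linarith [hjKr, hN7]
    rw [hmr]
    linarith [h2ur, hKtup, h1, hm₀r_lo, hi₀r0, hsq16]
  have hmu2z : 2 ≤ m - u := by
    have h : (2:ℝ) ≤ ((m - u : ℤ):ℝ) := by push_cast; linarith [hmu2]
    exact_mod_cast h
  -- factors
  set a₁ : ℤ := m - u with ha₁def
  set b₁ : ℤ := m + u + 1 with hb₁def
  set a₂ : ℤ := m - j - u' with ha₂def
  set b₂ : ℤ := m - j + u' + 1 with hb₂def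
  have hprod1 : n = a₁ * b₁ := by
    rw [ha₁def, hb₁def, hnform]; ring
  have hprod2 : n = a₂ * b₂ := by
    rw [ha₂def, hb₂def, hu'def, hnform]
    linear_combination (-(j*K))*h2u + j*hmj
  have horder1 : a₁ < a₂ := by
    have h1 : a₂ - a₁ = j*(K-1) := by rw [ha₂def, ha₁def, hu'def]; ring
    have h2 : 0 < j*(K-1) := mul_pos (by omega) (by omega)
    linarith
  have horder2 : a₂ ≤ b₂ := by rw [ha₂def, hb₂def]; linarith [hu'0]
  have horder3 : b₂ < b₁ := by
    have h1 : b₁ - b₂ = j*(K+1) := by rw [hb₁def, hb₂def, hu'def]; ring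
    have h2 : 0 < j*(K+1) := mul_pos (by omega) (by omega)
    linarith
  -- closeness to x
  have hYnr : (Y:ℝ) ≤ (n:ℝ) := by exact_mod_cast hYn
  have hnx : x ≤ (n:ℝ) := le_trans hY1 hYnr
  have hjr1 : (1:ℝ) ≤ (j:ℝ) := by exact_mod_cast hj1
  have hgap : (n:ℝ) - x ≤ 100*x^((1:ℝ)/2) := by
    have h1 : (n:ℝ) ≤ (Y:ℝ) + ((K:ℝ)*(K:ℝ)-1)*((j:ℝ)+1) := by
      exact_mod_cast hnY
    have h2 : ((K:ℝ)*(K:ℝ)-1)*((j:ℝ)+1) ≤ (K:ℝ)*((j:ℝ)*(K:ℝ)) + (K:ℝ)*(K:ℝ) := by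
      linarith only [hjr1]
    have h3 : (K:ℝ)*((j:ℝ)*(K:ℝ)) ≤ 90*((1/1000)*x^((1:ℝ)/2)) := by
      have ha := mul_le_mul hKle hjKr hjK0 (by positivity : (0:ℝ) ≤ 3*x^p)
      have hb : 3*x^p*(30*x^((1-θ)/2)) = 90*(x^p*x^((1-θ)/2)) := by ring
      have hc : x^p * x^((1-θ)/2) = x^(1-3*θ/2) := by
        rw [hmul, show p + (1-θ)/2 = 1-3*θ/2 by rw [hpdef]; ring]
      rw [hb, hc] at ha
      linarith [hN3]
    have h4 : x^(1-2*θ) ≤ x^((1:ℝ)/2) := hmono (by linarith)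
    linarith [hY2, h1, h2, h3, hKsq, h4]
  have habs : |(n:ℝ) - x| ≤ 1000 * x ^ ((1:ℝ)/2 + ε) := by
    have h1 : x^((1:ℝ)/2) ≤ x^((1:ℝ)/2+ε) := hmono (by linarith)
    rw [abs_of_nonneg (by linarith [hnx])]
    linarith [hgap, (hrp ((1:ℝ)/2+ε)).le]
  -- sqrt bounds
  have hnr_form : (n:ℝ) = (m:ℝ)*((m:ℝ)+1) - (u:ℝ)*((u:ℝ)+1) := by
    exact_mod_cast hnform
  have huu0 : (0:ℝ) ≤ (u:ℝ)*((u:ℝ)+1) := by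
    have h := AS2Aux.mul_succ_nonneg u
    have h2 : ((0:ℤ):ℝ) ≤ ((u*(u+1):ℤ):ℝ) := by exact_mod_cast h
    push_cast at h2; linarith
  have hmpos : (0:ℝ) < (m:ℝ) := by linarith [hmlo, hsq16]
  have hnle : (n:ℝ) ≤ ((m:ℝ)+1)^2 := by linarith only [hnr_form, huu0, hmpos]
  have hn0r : (0:ℝ) < (n:ℝ) := by linarith [hnx]
  have hsq_up : (n:ℝ)^((1:ℝ)/2) ≤ (m:ℝ)+1 :=
    AS2Aux.sqrt_le_of_sq hn0r.le (by linarith) hnle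
  set q : ℝ := (u:ℝ)*((u:ℝ)+1)/(m:ℝ) with hqdef
  have hq0 : 0 ≤ q := div_nonneg huu0 hmpos.le
  have hqu : q ≤ (u:ℝ) := by
    rw [hqdef, div_le_iff₀ hmpos]
    have e := mul_le_mul_of_nonneg_left (show (u:ℝ)+1 ≤ (m:ℝ) by linarith [hmu2]) hur0
    linarith only [e]
  have hmq : (m:ℝ)*q = (u:ℝ)*((u:ℝ)+1) := by
    rw [hqdef]; field_simp
  have hsq_lo : (m:ℝ) - q ≤ (n:ℝ)^((1:ℝ)/2) := by
    apply AS2Aux.le_sqrt_of_sq (by linarith [hqu, hmu2])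
    have e1 := mul_le_mul hqu hqu hq0 hur0
    have e2 := mul_le_mul_of_nonneg_left (show (u:ℝ) ≤ (u:ℝ)+1 by linarith) hur0
    linarith only [hnr_form, hmq, e1, e2, hmpos, hq0, hqu]
  have hθx1 : (1:ℝ) ≤ x^θ := Real.one_le_rpow hx1 hθ0.le
  have hdev : (u:ℝ) + 1 + q ≤ 91*x^θ := by
    have h1 : (u:ℝ)*((u:ℝ)+1) ≤ 42*(x^θ*x^θ) := by
      have e := mul_le_mul hur_up (show (u:ℝ)+1 ≤ 7*x^θ by linarith [hur_up, hθx1])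
        (by linarith [hur0]) (by positivity)
      linarith only [e]
    have h3 : x^θ ≤ x^((1:ℝ)/2) := hmono hθ2
    have h4 : x^((1:ℝ)/2)/2 ≤ (m:ℝ) := by linarith [hmlo, hsq16]
    have h2 : q ≤ 84*x^θ := by
      rw [hqdef, div_le_iff₀ hmpos]
      have e2 := mul_le_mul_of_nonneg_left h3 (show (0:ℝ) ≤ 42*x^θ by positivity)
      have e3 := mul_le_mul_of_nonneg_left h4 (show (0:ℝ) ≤ 84*x^θ by positivity)
      linarith only [h1, e2, e3]
    linarith [hur_up, h2, hθx1]
  have hnθ : x^θ ≤ (n:ℝ)^θ := Real.rpow_le_rpow hx0.le hnx hθ0.le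
  have hnθ0 : (0:ℝ) < (n:ℝ)^θ := Real.rpow_pos_of_pos hn0r θ
  have hlow : (n:ℝ)^((1:ℝ)/2) - 2000*(n:ℝ)^θ ≤ (a₁:ℝ) := by
    have h1 : (a₁:ℝ) = (m:ℝ) - (u:ℝ) := by rw [ha₁def]; push_cast; ring
    have h2 : (u:ℝ) + 1 ≤ 2000*(n:ℝ)^θ := by
      have h3 : (u:ℝ)+1 ≤ 7*x^θ := by linarith [hur_up, hθx1]
      linarith [hnθ, hnθ0]
    linarith [hsq_up, h1]
  have hhigh : (b₁:ℝ) ≤ (n:ℝ)^((1:ℝ)/2) + 2000*(n:ℝ)^θ := by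
    have h1 : (b₁:ℝ) = (m:ℝ) + (u:ℝ) + 1 := by rw [hb₁def]; push_cast; ring
    have h2 : (u:ℝ) + 1 + q ≤ 2000*(n:ℝ)^θ := by linarith [hdev, hnθ, hnθ0]
    linarith [hsq_lo, h1]
  refine ⟨n, habs, ?_⟩
  unfold AlmostSquareType2
  refine ⟨a₁, a₂, b₂, b₁, horder1, horder2, horder3, hprod1, hprod2, ?_⟩
  intro c hc
  have hrange : a₁ ≤ c ∧ c ≤ b₁ := by
    simp only [Set.mem_insert_iff, Set.mem_singleton_iff] at hc
    rcases hc with rfl | rfl | rfl | rfl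
    · exact ⟨le_refl _, by linarith [horder1, horder2, horder3]⟩
    · exact ⟨by linarith [horder1], by linarith [horder2, horder3]⟩
    · exact ⟨by linarith [horder1, horder2], by linarith [horder3]⟩
    · exact ⟨by linarith [horder1, horder2, horder3], le_refl _⟩
  obtain ⟨hca, hcb⟩ := hrange
  have hcar : (a₁:ℝ) ≤ (c:ℝ) := by exact_mod_cast hca
  have hcbr : (c:ℝ) ≤ (b₁:ℝ) := by exact_mod_cast hcb
  exact ⟨by linarith [hlow], by linarith [hhigh]⟩
end
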